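/- arXiv:1507.07866 — 2 statements merged into one kernel-verified Lean document; each statement's English description precedes it below -/
import Mathlib

section
/- Let 0 < q ≤ p ≤ ∞ and let u, w be nonnegative measurable functions on (0,∞) with ‖u‖_{L^q(t,∞)} < ∞ for all t > 0. Then the inequality ‖g‖_{L^p(w)} ≤ c ‖ t ↦ ess sup_{x∈(0,t)} g(x) ‖_{L^q(u)} holds for all nonnegative measurable g if and only if E = sup_{t>0} ‖w‖_{L^p(t,∞)} ‖u‖_{L^q(t,∞)}^{−1} < ∞, and the best constant c satisfies c ≈ E with constants depending only on p, q. -/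
open MeasureTheory ENNReal Set

noncomputable section

/-- Weighted `L^p` functional over a set `s`, for `p ∈ (0,∞]`. -/
def wnorm (p : ℝ≥0∞) (g : ℝ → ℝ≥0∞) (s : Set ℝ) : ℝ≥0∞ :=
  if p = ∞ then essSup g (volume.restrict s)
  else (∫⁻ x in s, g x ^ p.toReal) ^ (1 / p.toReal)

namespace RSH

/-- The supremal operator. -/
def S (g : ℝ → ℝ≥0∞) : ℝ → ℝ≥0∞ := fun t => essSup g (volume.restrict (Ioo 0 t))

/-- Right-continuous monotone envelope. -/
def phi (g : ℝ → ℝ≥0∞) : ℝ → ℝ≥0∞ := fun x => ⨅ (rt : ℚ), if x < (rt : ℝ) then S g rt else ∞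

lemma S_mono (g : ℝ → ℝ≥0∞) : Monotone (S g) := by
  intro s t hst
  exact essSup_mono_measure (Measure.absolutelyContinuous_of_le
    (Measure.restrict_mono (Ioo_subset_Ioo le_rfl hst) le_rfl))

lemma phi_mono (g : ℝ → ℝ≥0∞) : Monotone (phi g) := by
  intro x y hxy
  refine le_iInf fun rt => ?_
  by_cases h : y < (rt : ℝ)
  · have h' : phi g x ≤ S g rt := iInf_le_of_le rt (by simp [lt_of_le_of_lt hxy h])
    simpa [h] using h'
  · simp [h]

lemma phi_measurable (g : ℝ → ℝ≥0∞) : Measurable (phi g) := (phi_mono g).measurable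

lemma phi_le_S (g : ℝ → ℝ≥0∞) {x t : ℝ} (hxt : x < t) : phi g x ≤ S g t := by
  obtain ⟨rt, h1, h2⟩ := exists_rat_btwn hxt
  exact le_trans (iInf_le_of_le rt (by simp [h1])) (S_mono g h2.le)

lemma ae_le_phi (g : ℝ → ℝ≥0∞) : ∀ᵐ x ∂(volume.restrict (Ioi 0)), g x ≤ phi g x := by
  have h1 : ∀ rt : ℚ, ∀ᵐ x ∂(volume.restrict (Ioi (0:ℝ))), x < (rt:ℝ) → g x ≤ S g rt := by
    intro rt
    have h2 : ∀ᵐ x ∂(volume.restrict (Ioo (0:ℝ) (rt:ℝ))), g x ≤ S g rt := ae_le_essSup g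
    rw [ae_restrict_iff' measurableSet_Ioo] at h2
    rw [ae_restrict_iff' measurableSet_Ioi]
    filter_upwards [h2] with x hx hx0 hxrt
    exact hx ⟨hx0, hxrt⟩
  have h3 := ae_all_iff.mpr h1
  filter_upwards [h3] with x hx
  refine le_iInf fun rt => ?_
  by_cases h : x < (rt:ℝ)
  · simpa [h] using hx rt h
  · simp [h]

/-- value of the layer-measure. -/
lemma vol_layer (s : ℝ≥0∞) :
    ∫⁻ lam in Ioi (0:ℝ), (if ENNReal.ofReal lam < s then (1:ℝ≥0∞) else 0) = s := by
  have hms : MeasurableSet {lam : ℝ | ENNReal.ofReal lam < s} :=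
    measurableSet_lt ENNReal.measurable_ofReal measurable_const
  have h1 : ∀ lam : ℝ, (if ENNReal.ofReal lam < s then (1:ℝ≥0∞) else 0)
      = {lam : ℝ | ENNReal.ofReal lam < s}.indicator (fun _ => (1:ℝ≥0∞)) lam := by
    intro lam
    by_cases h : ENNReal.ofReal lam < s <;> simp [h, Set.indicator]
  rw [lintegral_congr h1, lintegral_indicator hms, Measure.restrict_restrict hms,
    setLIntegral_one]
  rcases eq_or_ne s ∞ with hs | hs
  · have : {lam : ℝ | ENNReal.ofReal lam < s} ∩ Ioi 0 = Ioi (0:ℝ) := by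
      ext lam; simp [hs]
    rw [this, hs, Real.volume_Ioi]
  · have : {lam : ℝ | ENNReal.ofReal lam < s} ∩ Ioi 0 = Ioo (0:ℝ) s.toReal := by
      ext lam
      simp only [mem_inter_iff, mem_setOf_eq, mem_Ioi, mem_Ioo]
      constructor
      · rintro ⟨h1, h2⟩
        exact ⟨h2, (ENNReal.ofReal_lt_iff_lt_toReal h2.le hs).mp h1⟩
      · rintro ⟨h1, h2⟩
        exact ⟨(ENNReal.ofReal_lt_iff_lt_toReal h1.le hs).mpr h2, h1⟩
    rw [this, Real.volume_Ioo, sub_zero, ENNReal.ofReal_toReal hs]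

/-- layer-cake lower bound for powers. -/
lemma layer {r : ℝ} (hr : 1 ≤ r) (s : ℝ≥0∞) :
    s ^ r ≤ ∫⁻ lam in Ioi (0:ℝ),
      (if ENNReal.ofReal lam < s then ENNReal.ofReal (r * lam ^ (r-1)) else 0) := by
  have hr0 : (0:ℝ) < r := lt_of_lt_of_le one_pos hr
  have hr1 : (0:ℝ) ≤ r - 1 := by linarith
  rcases eq_or_ne s ∞ with hs | hs
  · subst hs
    rw [ENNReal.top_rpow_of_pos hr0]
    simp only [ENNReal.ofReal_lt_top, if_true]
    rw [top_le_iff]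
    have hle : ∫⁻ lam in Ioi (1:ℝ), ENNReal.ofReal r
        ≤ ∫⁻ lam in Ioi (1:ℝ), ENNReal.ofReal (r * lam ^ (r-1)) := by
      refine lintegral_mono_ae ?_
      filter_upwards [ae_restrict_mem measurableSet_Ioi] with lam hlam
      refine ENNReal.ofReal_le_ofReal ?_
      nlinarith [Real.one_le_rpow (le_of_lt hlam) hr1]
    have h2 : (∫⁻ lam in Ioi (1:ℝ), ENNReal.ofReal r) = ∞ := by
      rw [setLIntegral_const, Real.volume_Ioi, ENNReal.mul_top]
      simp [ENNReal.ofReal_eq_zero, not_le, hr0]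
    have h3 : (∫⁻ lam in Ioi (1:ℝ), ENNReal.ofReal (r * lam ^ (r-1)))
        ≤ ∫⁻ lam in Ioi (0:ℝ), ENNReal.ofReal (r * lam ^ (r-1)) :=
      lintegral_mono_set (Ioi_subset_Ioi zero_le_one)
    exact top_le_iff.mp ((h2 ▸ hle).trans h3)
  · set T := s.toReal with hT
    have hT0 : 0 ≤ T := ENNReal.toReal_nonneg
    have hseq : ∀ lam : ℝ, lam ∈ Ioi (0:ℝ) →
        (if ENNReal.ofReal lam < s then ENNReal.ofReal (r * lam ^ (r-1)) else 0)
        = (Ioo (0:ℝ) T).indicator (fun lam => ENNReal.ofReal (r * lam ^ (r-1))) lam := by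
      intro lam hlam
      have : ENNReal.ofReal lam < s ↔ lam < T :=
        ENNReal.ofReal_lt_iff_lt_toReal (le_of_lt hlam) hs
      by_cases h : lam < T
      · rw [if_pos (this.mpr h), Set.indicator_of_mem (Set.mem_Ioo.mpr ⟨hlam, h⟩) _]
      · rw [if_neg (fun hc => h (this.mp hc)), Set.indicator_of_notMem (fun hc => h hc.2)]
    rw [setLIntegral_congr_fun measurableSet_Ioi hseq]
    rw [lintegral_indicator measurableSet_Ioo, Measure.restrict_restrict measurableSet_Ioo,
      (by rw [Set.inter_eq_left]; exact Ioo_subset_Ioi_self : Ioo (0:ℝ) T ∩ Ioi 0 = Ioo 0 T)]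
    -- compute the integral
    have hint : IntegrableOn (fun lam : ℝ => r * lam ^ (r-1)) (Ioo 0 T) volume := by
      have h1 : IntervalIntegrable (fun lam : ℝ => lam ^ (r-1)) volume 0 T :=
        intervalIntegral.intervalIntegrable_rpow' (by linarith)
      have h2 : IntervalIntegrable (fun lam : ℝ => r * lam ^ (r-1)) volume 0 T := by
        simpa using h1.const_mul r
      exact ((intervalIntegrable_iff_integrableOn_Ioc_of_le hT0).mp h2).mono_set Ioo_subset_Ioc_self
    have hnn : 0 ≤ᵐ[volume.restrict (Ioo (0:ℝ) T)] fun lam : ℝ => r * lam ^ (r-1) := by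
      filter_upwards [ae_restrict_mem measurableSet_Ioo] with lam hlam
      have := Real.rpow_nonneg (le_of_lt hlam.1) (r-1)
      positivity
    rw [← ofReal_integral_eq_lintegral_ofReal hint hnn]
    have hval : ∫ lam in Ioo (0:ℝ) T, r * lam ^ (r-1) = T ^ r := by
      rw [← integral_Ioc_eq_integral_Ioo, ← intervalIntegral.integral_of_le hT0]
      rw [intervalIntegral.integral_const_mul, integral_rpow (Or.inl (by linarith))]
      rw [sub_add_cancel, Real.zero_rpow (by positivity), sub_zero]
      field_simp
    rw [hval, ← ENNReal.ofReal_rpow_of_nonneg hT0 (le_of_lt hr0), hT, ENNReal.ofReal_toReal hs]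

/-- test-function computation. -/
lemma wnorm_indicator_mul (rho : ℝ≥0∞) (hrho : 0 < rho) (v : ℝ → ℝ≥0∞) (hv : Measurable v)
    {t : ℝ} (ht : 0 < t) :
    wnorm rho (fun x => (if t < x then (1:ℝ≥0∞) else 0) * v x) (Ioi 0) = wnorm rho v (Ioi t) := by
  have hsub : Ioi t ⊆ Ioi (0:ℝ) := Ioi_subset_Ioi (le_of_lt ht)
  rcases eq_or_ne rho ∞ with hrho' | hrho'
  · subst hrho'
    rw [wnorm, if_pos rfl, wnorm, if_pos rfl]
    apply le_antisymm
    · refine essSup_le_of_ae_le _ ?_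
      set C := essSup v (volume.restrict (Ioi t)) with hC
      have h2 : ∀ᵐ x ∂volume, x ∈ Ioi t → v x ≤ C :=
        (ae_restrict_iff' measurableSet_Ioi).mp (ENNReal.ae_le_essSup v)
      filter_upwards [ae_restrict_of_ae h2] with x hx
      by_cases h : t < x
      · simpa [h] using hx h
      · simp [h]
    · have h1 : essSup v (volume.restrict (Ioi t))
          = essSup (fun x => (if t < x then (1:ℝ≥0∞) else 0) * v x) (volume.restrict (Ioi t)) := by
        refine essSup_congr_ae ?_
        filter_upwards [ae_restrict_mem measurableSet_Ioi] with x hx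
        simp [mem_Ioi.mp hx]
      rw [h1]
      exact essSup_mono_measure (Measure.absolutelyContinuous_of_le
        (Measure.restrict_mono hsub le_rfl))
  · have hR : 0 < rho.toReal := ENNReal.toReal_pos (ne_of_gt hrho) hrho'
    rw [wnorm, if_neg hrho', wnorm, if_neg hrho']
    congr 1
    have h1 : ∀ x : ℝ, ((if t < x then (1:ℝ≥0∞) else 0) * v x) ^ rho.toReal
        = (Ioi t).indicator (fun x => v x ^ rho.toReal) x := by
      intro x
      by_cases h : t < x
      · simp [h, Set.indicator_of_mem, mem_Ioi]
      · simp [h, Set.indicator_of_notMem, mem_Ioi, ENNReal.zero_rpow_of_pos hR]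
    rw [lintegral_congr h1, lintegral_indicator measurableSet_Ioi,
      Measure.restrict_restrict measurableSet_Ioi, Set.inter_eq_left.mpr hsub]

lemma S_indicator {t : ℝ} (ht : 0 < t) {s : ℝ} (hs : s ∈ Ioi (0:ℝ)) :
    S (fun x => if t < x then (1:ℝ≥0∞) else 0) s = (if t < s then (1:ℝ≥0∞) else 0) := by
  by_cases h : t < s
  · rw [if_pos h]
    apply le_antisymm
    · refine essSup_le_of_ae_le _ (Filter.Eventually.of_forall fun x => ?_)
      by_cases hx : t < x <;> simp [hx]
    · by_contra hlt
      push_neg at hlt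
      have h2 : ∀ᵐ x ∂volume, x ∈ Ioo (0:ℝ) s →
          (if t < x then (1:ℝ≥0∞) else 0) ≤ S (fun x => if t < x then (1:ℝ≥0∞) else 0) s :=
        (ae_restrict_iff' measurableSet_Ioo).mp (ENNReal.ae_le_essSup _)
      have hsub2 : Ioo t s ⊆ {x : ℝ | ¬(x ∈ Ioo (0:ℝ) s →
          (if t < x then (1:ℝ≥0∞) else 0) ≤ S (fun x => if t < x then (1:ℝ≥0∞) else 0) s)} := by
        intro x hx
        simp only [mem_setOf_eq, not_forall]
        refine ⟨⟨lt_trans ht hx.1, hx.2⟩, ?_⟩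
        rw [if_pos hx.1]
        exact fun hc => absurd (lt_of_le_of_lt hc hlt) (lt_irrefl _)
      have h3 : volume (Ioo t s) = 0 :=
        measure_mono_null hsub2 (by simpa [ae_iff] using h2)
      rw [Real.volume_Ioo] at h3
      simp only [ENNReal.ofReal_eq_zero, sub_nonpos] at h3
      exact absurd h (not_lt.mpr h3)
  · rw [if_neg h]
    push_neg at h
    refine le_antisymm (essSup_le_of_ae_le _ ?_) (zero_le)
    filter_upwards [ae_restrict_mem measurableSet_Ioo] with x hx
    rw [if_neg (not_lt.mpr (le_trans (le_of_lt hx.2) h))]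

/-- The main inequality, case `p = ∞`. -/
lemma main_top (q : ℝ≥0∞) (hq : 0 < q) (u w g : ℝ → ℝ≥0∞)
    (hu : Measurable u) (hw : Measurable w) (hg : Measurable g) (E0 : ℝ≥0∞)
    (hE : ∀ t ∈ Ioi (0:ℝ), wnorm ∞ w (Ioi t) ≤ E0 * wnorm q u (Ioi t)) :
    wnorm ∞ (fun x => g x * w x) (Ioi 0) ≤ E0 * wnorm q (fun t => u t * S g t) (Ioi 0) := by
  set C := wnorm q (fun t => u t * S g t) (Ioi 0) with hC
  have key : ∀ t : ℝ, 0 < t → phi g t * wnorm q u (Ioi t) ≤ C := by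
    intro t ht
    rcases eq_or_ne q ∞ with hqt | hqt
    · subst hqt
      rw [hC, wnorm, if_pos rfl, wnorm, if_pos rfl, ← ENNReal.essSup_const_mul]
      have h1 : essSup (fun x => phi g t * u x) (volume.restrict (Ioi t))
          ≤ essSup (fun x => u x * S g x) (volume.restrict (Ioi t)) := by
        refine essSup_mono_ae ?_
        filter_upwards [ae_restrict_mem measurableSet_Ioi] with x hx
        rw [mul_comm]
        exact mul_le_mul_right (phi_le_S g (mem_Ioi.mp hx)) _
      exact h1.trans (essSup_mono_measure (Measure.absolutelyContinuous_of_le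
        (Measure.restrict_mono (Ioi_subset_Ioi (le_of_lt ht)) le_rfl)))
    · have hqR : 0 < q.toReal := ENNReal.toReal_pos (ne_of_gt hq) hqt
      rw [hC, wnorm, if_neg hqt, wnorm, if_neg hqt]
      have h0 : phi g t = (phi g t ^ q.toReal) ^ (1/q.toReal) := by
        rw [← ENNReal.rpow_mul, mul_one_div_cancel (ne_of_gt hqR), ENNReal.rpow_one]
      rw [h0, ← ENNReal.mul_rpow_of_nonneg _ _ (by positivity)]
      refine ENNReal.rpow_le_rpow ?_ (by positivity)
      rw [← lintegral_const_mul _ (hu.pow_const _)]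
      have h2 : ∫⁻ x in Ioi t, phi g t ^ q.toReal * u x ^ q.toReal
          ≤ ∫⁻ x in Ioi t, (u x * S g x) ^ q.toReal := by
        refine lintegral_mono_ae ?_
        filter_upwards [ae_restrict_mem measurableSet_Ioi] with x hx
        rw [ENNReal.mul_rpow_of_nonneg _ _ (le_of_lt hqR), mul_comm]
        exact mul_le_mul_right
          (ENNReal.rpow_le_rpow (phi_le_S g (mem_Ioi.mp hx)) (le_of_lt hqR)) _
      exact h2.trans (lintegral_mono_set (Ioi_subset_Ioi (le_of_lt ht)))
  rw [wnorm, if_pos rfl]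
  refine essSup_le_of_ae_le _ ?_
  have h1 := ae_le_phi g
  have h2 : ∀ᵐ x ∂(volume.restrict (Ioi (0:ℝ))), ∀ rt : ℚ, (rt:ℝ) < x →
      w x ≤ essSup w (volume.restrict (Ioi (rt:ℝ))) := by
    refine ae_all_iff.mpr fun rt => ?_
    have h4 := (ae_restrict_iff' measurableSet_Ioi).mp
      (ENNReal.ae_le_essSup (μ := volume.restrict (Ioi (rt:ℝ))) w)
    filter_upwards [ae_restrict_of_ae h4] with x hx
    exact fun hlt => hx hlt
  have hD : volume {x : ℝ | ¬ContinuousAt (phi g) x} = 0 :=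
    Set.Countable.measure_zero ((phi_mono g).countable_not_continuousAt) _
  have h3 : ∀ᵐ x ∂(volume.restrict (Ioi (0:ℝ))), ContinuousAt (phi g) x :=
    ae_restrict_of_ae (ae_iff.mpr hD)
  filter_upwards [h1, h2, h3, ae_restrict_mem measurableSet_Ioi] with x hx1 hx2 hx3 hx0
  have hphix : phi g x ≤ ⨆ (rt : ℚ) (_ : 0 < (rt:ℝ) ∧ (rt:ℝ) < x), phi g rt := by
    refine le_of_forall_lt fun c hc => ?_
    have hnb : (phi g) ⁻¹' (Ioi c) ∈ nhds x := hx3 (Ioi_mem_nhds hc)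
    rcases Metric.mem_nhds_iff.mp hnb with ⟨δ, hδ, hball⟩
    obtain ⟨rt, hrt1, hrt2⟩ := exists_rat_btwn (max_lt (sub_lt_self x hδ) (mem_Ioi.mp hx0))
    have h0rt : 0 < (rt:ℝ) := lt_of_le_of_lt (le_max_right _ _) hrt1
    have hmem : (rt:ℝ) ∈ Metric.ball x δ := by
      rw [Metric.mem_ball, Real.dist_eq, abs_sub_lt_iff]
      constructor
      · linarith
      · have := lt_of_le_of_lt (le_max_left _ _) hrt1
        linarith
    have hc2 : c < phi g rt := hball hmem
    exact lt_of_lt_of_le hc2 (le_iSup₂ (f := fun (rt : ℚ) (_ : 0 < (rt:ℝ) ∧ (rt:ℝ) < x) =>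
      phi g rt) rt ⟨h0rt, hrt2⟩)
  calc g x * w x ≤ phi g x * w x := mul_le_mul_left hx1 _
    _ ≤ (⨆ (rt : ℚ) (_ : 0 < (rt:ℝ) ∧ (rt:ℝ) < x), phi g rt) * w x := mul_le_mul_left hphix _
    _ = ⨆ (rt : ℚ) (_ : 0 < (rt:ℝ) ∧ (rt:ℝ) < x), phi g rt * w x := by
        simp_rw [ENNReal.iSup_mul]
    _ ≤ E0 * C := by
        refine iSup₂_le fun rt hcond => ?_
        calc phi g rt * w x ≤ phi g rt * essSup w (volume.restrict (Ioi (rt:ℝ))) :=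
              mul_le_mul_right (hx2 rt hcond.2) _
          _ ≤ phi g rt * (E0 * wnorm q u (Ioi (rt:ℝ))) := by
              refine mul_le_mul_right ?_ _
              have := hE (rt:ℝ) hcond.1
              rwa [wnorm, if_pos rfl] at this
          _ = E0 * (phi g rt * wnorm q u (Ioi (rt:ℝ))) := mul_left_comm _ _ _
          _ ≤ E0 * C := mul_le_mul_right (key rt hcond.1) _

/-- The main inequality, case `p < ∞`. -/
lemma main_fin (p q : ℝ≥0∞) (hq : 0 < q) (hqp : q ≤ p) (hp : p ≠ ∞)
    (u w g : ℝ → ℝ≥0∞)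
    (hu : Measurable u) (hw : Measurable w) (hg : Measurable g) (E0 : ℝ≥0∞)
    (hE : ∀ t ∈ Ioi (0:ℝ), wnorm p w (Ioi t) ≤ E0 * wnorm q u (Ioi t)) :
    wnorm p (fun x => g x * w x) (Ioi 0) ≤
      ENNReal.ofReal (p.toReal / q.toReal) ^ (1 / p.toReal) * E0 *
        wnorm q (fun t => u t * S g t) (Ioi 0) := by
  have hqt : q ≠ ∞ := fun h => hp (top_le_iff.mp (h ▸ hqp))
  have hpR : 0 < p.toReal := ENNReal.toReal_pos (ne_of_gt (lt_of_lt_of_le hq hqp)) hp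
  have hqR : 0 < q.toReal := ENNReal.toReal_pos (ne_of_gt hq) hqt
  set pR := p.toReal with hpRdef
  set qR := q.toReal with hqRdef
  have hqpR : qR ≤ pR := ENNReal.toReal_mono hp hqp
  set r := pR / qR with hrdef
  have hr : 1 ≤ r := (one_le_div hqR).mpr hqpR
  have hr0 : (0:ℝ) < r := lt_of_lt_of_le one_pos hr
  have hr1 : (0:ℝ) ≤ r - 1 := by linarith
  set Mq : ℝ≥0∞ := ∫⁻ x in Ioi (0:ℝ), (u x * S g x) ^ qR with hMq
  set Uq : ℝ → ℝ≥0∞ := fun t => ∫⁻ x in Ioi t, u x ^ qR with hUqdef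
  have hSmeas : Measurable (S g) := (S_mono g).measurable
  have hRHS : wnorm q (fun t => u t * S g t) (Ioi 0) = Mq ^ (1/qR) := by
    rw [wnorm, if_neg hqt]
  -- Step B : replace g by phi g
  have hB : wnorm p (fun x => g x * w x) (Ioi 0)
      ≤ (∫⁻ x in Ioi (0:ℝ), phi g x ^ pR * w x ^ pR) ^ (1/pR) := by
    rw [wnorm, if_neg hp]
    refine ENNReal.rpow_le_rpow ?_ (by positivity)
    refine lintegral_mono_ae ?_
    filter_upwards [ae_le_phi g] with x hx
    rw [← ENNReal.mul_rpow_of_nonneg _ _ (le_of_lt hpR)]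
    exact ENNReal.rpow_le_rpow (mul_le_mul_left hx _) (le_of_lt hpR)
  set k : ℝ → ℝ≥0∞ := fun lam => ENNReal.ofReal (r * lam ^ (r-1)) with hkdef
  have hkmeas : Measurable k := by
    apply ENNReal.measurable_ofReal.comp
    have : Measurable fun lam : ℝ => lam ^ (r-1) := by measurability
    exact this.const_mul r
  set F : ℝ → ℝ → ℝ≥0∞ := fun lam x =>
    k lam * ((if ENNReal.ofReal lam < phi g x ^ qR then 1 else 0) * w x ^ pR) with hFdef
  have hFm : Measurable (Function.uncurry F) := by
    apply Measurable.mul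
    · exact hkmeas.comp measurable_fst
    · apply Measurable.mul
      · refine Measurable.ite ?_ measurable_const measurable_const
        exact measurableSet_lt (ENNReal.measurable_ofReal.comp measurable_fst)
          (((phi_measurable g).pow_const qR).comp measurable_snd)
      · exact (hw.pow_const pR).comp measurable_snd
  -- Step C : layer-cake expansion
  have hC : (∫⁻ x in Ioi (0:ℝ), phi g x ^ pR * w x ^ pR)
      ≤ ∫⁻ lam in Ioi (0:ℝ), ∫⁻ x in Ioi (0:ℝ), F lam x := by
    rw [lintegral_lintegral_swap hFm.aemeasurable]
    refine lintegral_mono_ae ?_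
    filter_upwards [ae_restrict_mem measurableSet_Ioi] with x _
    have h1 : phi g x ^ pR = (phi g x ^ qR) ^ r := by
      rw [← ENNReal.rpow_mul]
      congr 1
      rw [hrdef]
      field_simp
    have hmeas2 : Measurable fun lam : ℝ =>
        (if ENNReal.ofReal lam < phi g x ^ qR then k lam else 0) := by
      refine Measurable.ite ?_ hkmeas measurable_const
      exact measurableSet_lt ENNReal.measurable_ofReal measurable_const
    calc phi g x ^ pR * w x ^ pR
        ≤ (∫⁻ lam in Ioi (0:ℝ),
            (if ENNReal.ofReal lam < phi g x ^ qR then k lam else 0)) * w x ^ pR := by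
          rw [h1]
          exact mul_le_mul_left (layer hr _) _
      _ = ∫⁻ lam in Ioi (0:ℝ),
            (if ENNReal.ofReal lam < phi g x ^ qR then k lam else 0) * w x ^ pR := by
          rw [← lintegral_mul_const _ hmeas2]
      _ = ∫⁻ lam in Ioi (0:ℝ), F lam x := by
          refine lintegral_congr fun lam => ?_
          by_cases hcase : ENNReal.ofReal lam < phi g x ^ qR <;>
            simp [hFdef, hcase, mul_assoc]
  -- tail bounds for w
  have hW : ∀ t : ℝ, 0 < t → (∫⁻ x in Ioi t, w x ^ pR) ≤ E0 ^ pR * Uq t ^ r := by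
    intro t ht
    have h1 := hE t (mem_Ioi.mpr ht)
    rw [wnorm, if_neg hp, wnorm, if_neg hqt] at h1
    have h2 := ENNReal.rpow_le_rpow h1 (le_of_lt hpR)
    rw [← ENNReal.rpow_mul, one_div_mul_cancel (ne_of_gt hpR), ENNReal.rpow_one,
      ENNReal.mul_rpow_of_nonneg _ _ (le_of_lt hpR), ← ENNReal.rpow_mul,
      (show 1/qR * pR = r by rw [hrdef]; ring)] at h2
    exact h2
  have hW0 : (∫⁻ x in Ioi (0:ℝ), w x ^ pR) ≤ E0 ^ pR * Uq 0 ^ r := by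
    have hmn : ∀ m n : ℕ, m ≤ n → (1/((n:ℝ)+1)) ≤ 1/((m:ℝ)+1) := by
      intro m n hmn
      apply one_div_le_one_div_of_le (by positivity)
      have : (m:ℝ) ≤ n := Nat.cast_le.mpr hmn
      linarith
    have hmono : Monotone (fun n : ℕ => (Ioi (1/((n:ℝ)+1))).indicator (fun x => w x ^ pR)) :=
      fun m n h x => Set.indicator_le_indicator_of_subset (Ioi_subset_Ioi (hmn m n h))
        (fun _ => zero_le) _
    have hsup : ∀ x : ℝ, (⨆ n : ℕ, (Ioi (1/((n:ℝ)+1))).indicator (fun x => w x ^ pR) x)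
        = (Ioi (0:ℝ)).indicator (fun x => w x ^ pR) x := by
      intro x
      rcases le_or_gt x 0 with hx | hx
      · rw [Set.indicator_of_notMem (by simpa using hx)]
        refine le_antisymm (iSup_le fun n => ?_) (zero_le)
        rw [Set.indicator_of_notMem]
        simp only [mem_Ioi, not_lt]
        exact hx.trans (by positivity)
      · rw [Set.indicator_of_mem (mem_Ioi.mpr hx)]
        refine le_antisymm (iSup_le fun n => ?_) ?_
        · by_cases hmem : x ∈ Ioi (1/((n:ℝ)+1))
          · rw [Set.indicator_of_mem hmem]
          · rw [Set.indicator_of_notMem hmem]; exact zero_le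
        · obtain ⟨n, hn⟩ := exists_nat_one_div_lt hx
          refine le_iSup_of_le n ?_
          rw [Set.indicator_of_mem (mem_Ioi.mpr hn)]
    calc (∫⁻ x in Ioi (0:ℝ), w x ^ pR)
        = ∫⁻ x, (Ioi (0:ℝ)).indicator (fun x => w x ^ pR) x :=
          (lintegral_indicator measurableSet_Ioi _).symm
      _ = ∫⁻ x, ⨆ n : ℕ, (Ioi (1/((n:ℝ)+1))).indicator (fun x => w x ^ pR) x := by
          refine lintegral_congr fun x => ?_
          rw [hsup]
      _ = ⨆ n : ℕ, ∫⁻ x, (Ioi (1/((n:ℝ)+1))).indicator (fun x => w x ^ pR) x :=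
          lintegral_iSup (fun n => (hw.pow_const pR).indicator measurableSet_Ioi) hmono
      _ ≤ E0 ^ pR * Uq 0 ^ r := by
          refine iSup_le fun n => ?_
          rw [lintegral_indicator measurableSet_Ioi]
          refine (hW _ (by positivity)).trans ?_
          refine mul_le_mul_right (ENNReal.rpow_le_rpow ?_ (le_of_lt hr0)) _
          exact lintegral_mono_set (Ioi_subset_Ioi (by positivity))
  -- the comparison integrand J
  set J : ℝ → ℝ≥0∞ := fun lam => ∫⁻ x in Ioi (0:ℝ),
    u x ^ qR * (if ENNReal.ofReal lam < S g x ^ qR then 1 else 0) with hJdef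
  have hJm : Measurable (Function.uncurry (fun lam x : ℝ =>
      u x ^ qR * (if ENNReal.ofReal lam < S g x ^ qR then (1:ℝ≥0∞) else 0))) := by
    apply Measurable.mul
    · exact (hu.pow_const qR).comp measurable_snd
    · refine Measurable.ite ?_ measurable_const measurable_const
      exact measurableSet_lt (ENNReal.measurable_ofReal.comp measurable_fst)
        ((hSmeas.pow_const qR).comp measurable_snd)
  have hJmeas : Measurable J := hJm.lintegral_prod_right
  -- Step D : per-lambda estimate
  have hD : ∀ lam : ℝ, 0 < lam → (∫⁻ x in Ioi (0:ℝ), F lam x)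
      ≤ (ENNReal.ofReal r * (E0 ^ pR * Mq ^ (r-1))) * J lam := by
    intro lam hlam
    have hc0 : ENNReal.ofReal lam ≠ 0 := by
      simp [ENNReal.ofReal_eq_zero, not_le, hlam]
    have hct : ENNReal.ofReal lam ≠ ∞ := ENNReal.ofReal_ne_top
    have hmeasI : Measurable fun x =>
        (if ENNReal.ofReal lam < phi g x ^ qR then (1:ℝ≥0∞) else 0) * w x ^ pR := by
      apply Measurable.mul
      · refine Measurable.ite ?_ measurable_const measurable_const
        exact measurableSet_lt measurable_const ((phi_measurable g).pow_const qR)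
      · exact hw.pow_const pR
    have hpull : (∫⁻ x in Ioi (0:ℝ), F lam x)
        = k lam * ∫⁻ x in Ioi (0:ℝ),
            (if ENNReal.ofReal lam < phi g x ^ qR then (1:ℝ≥0∞) else 0) * w x ^ pR :=
      lintegral_const_mul _ hmeasI
    set A : Set ℝ := {y : ℝ | ENNReal.ofReal lam < phi g y ^ qR} ∩ Ioi 0 with hA
    have hAsetm : MeasurableSet {y : ℝ | ENNReal.ofReal lam < phi g y ^ qR} :=
      measurableSet_lt measurable_const ((phi_measurable g).pow_const qR)
    have hIeq : (∫⁻ x in Ioi (0:ℝ),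
        (if ENNReal.ofReal lam < phi g x ^ qR then (1:ℝ≥0∞) else 0) * w x ^ pR)
        = ∫⁻ x in A, w x ^ pR := by
      have h1 : ∀ x : ℝ, (if ENNReal.ofReal lam < phi g x ^ qR then (1:ℝ≥0∞) else 0) * w x ^ pR
          = {y : ℝ | ENNReal.ofReal lam < phi g y ^ qR}.indicator (fun x => w x ^ pR) x := by
        intro x
        by_cases h : ENNReal.ofReal lam < phi g x ^ qR <;> simp [h, Set.indicator]
      rw [lintegral_congr h1, lintegral_indicator hAsetm, Measure.restrict_restrict hAsetm]
    rcases A.eq_empty_or_nonempty with hAe | hAne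
    · rw [hpull, hIeq, hAe]
      simp
    · set tau := sInf A with htau
      have hbdd : BddBelow A := ⟨0, fun y hy => le_of_lt hy.2⟩
      have htau0 : 0 ≤ tau := le_csInf hAne fun y hy => le_of_lt hy.2
      have hSgt : ∀ x : ℝ, tau < x → ENNReal.ofReal lam < S g x ^ qR := by
        intro x hxt
        obtain ⟨y, hyA, hyx⟩ := (csInf_lt_iff hbdd hAne).mp hxt
        exact lt_of_lt_of_le hyA.1 (ENNReal.rpow_le_rpow (phi_le_S g hyx) (le_of_lt hqR))
      have hIle : (∫⁻ x in A, w x ^ pR) ≤ ∫⁻ x in Ioi tau, w x ^ pR := by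
        refine le_trans (lintegral_mono_set fun y hy => csInf_le hbdd hy) ?_
        exact le_of_eq (setLIntegral_congr (Filter.EventuallyEq.symm Ioi_ae_eq_Ici))
      have hWtau : (∫⁻ x in Ioi tau, w x ^ pR) ≤ E0 ^ pR * Uq tau ^ r := by
        rcases htau0.lt_or_eq with h | h
        · exact hW tau h
        · rw [← h]; exact hW0
      have hUM : ENNReal.ofReal lam * Uq tau ≤ Mq := by
        rw [show Uq tau = ∫⁻ x in Ioi tau, u x ^ qR from rfl,
          ← lintegral_const_mul _ (hu.pow_const qR)]
        have h2 : (∫⁻ x in Ioi tau, ENNReal.ofReal lam * u x ^ qR)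
            ≤ ∫⁻ x in Ioi tau, (u x * S g x) ^ qR := by
          refine lintegral_mono_ae ?_
          filter_upwards [ae_restrict_mem measurableSet_Ioi] with x hx
          rw [ENNReal.mul_rpow_of_nonneg _ _ (le_of_lt hqR), mul_comm (u x ^ qR) _]
          exact mul_le_mul_left (le_of_lt (hSgt x (mem_Ioi.mp hx))) _
        exact h2.trans (lintegral_mono_set (Ioi_subset_Ioi htau0))
      have hUdiv : Uq tau ≤ Mq / ENNReal.ofReal lam :=
        (ENNReal.le_div_iff_mul_le (Or.inl hc0) (Or.inl hct)).mpr (by rwa [mul_comm])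
      have hUr : Uq tau ^ r ≤ (Mq / ENNReal.ofReal lam) ^ (r-1) * Uq tau := by
        rcases eq_or_ne (Uq tau) 0 with h0 | h0
        · rw [h0, ENNReal.zero_rpow_of_pos hr0]
          simp
        rcases eq_or_ne (Uq tau) ∞ with hti | hti
        · have hMc : Mq / ENNReal.ofReal lam = ∞ := top_le_iff.mp (hti ▸ hUdiv)
          have hne : (⊤:ℝ≥0∞) ^ (r-1) ≠ 0 := by
            rcases hr1.lt_or_eq with h | h
            · rw [ENNReal.top_rpow_of_pos h]; simp
            · rw [← h, ENNReal.rpow_zero]; simp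
          rw [hti, hMc, ENNReal.mul_top hne]
          exact le_top
        · have e1 : Uq tau ^ ((r-1)+1) = Uq tau ^ (r-1) * Uq tau := by
            rw [ENNReal.rpow_add _ _ h0 hti, ENNReal.rpow_one]
          have e2 : ((r:ℝ)-1)+1 = r := by ring
          rw [e2] at e1
          rw [e1]
          exact mul_le_mul_left (ENNReal.rpow_le_rpow hUdiv hr1) _
      have hUJ : Uq tau ≤ J lam := by
        have h2 : Uq tau ≤ ∫⁻ x in Ioi tau,
            u x ^ qR * (if ENNReal.ofReal lam < S g x ^ qR then 1 else 0) := by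
          refine lintegral_mono_ae ?_
          filter_upwards [ae_restrict_mem measurableSet_Ioi] with x hx
          rw [if_pos (hSgt x (mem_Ioi.mp hx)), mul_one]
        exact h2.trans (lintegral_mono_set (Ioi_subset_Ioi htau0))
      have hd0 : (ENNReal.ofReal lam) ^ (r-1) ≠ 0 :=
        ne_of_gt (ENNReal.rpow_pos (by simpa [pos_iff_ne_zero] using hc0) hct)
      have hdt : (ENNReal.ofReal lam) ^ (r-1) ≠ ∞ := ENNReal.rpow_ne_top_of_nonneg hr1 hct
      have halg : k lam * (Mq / ENNReal.ofReal lam) ^ (r-1)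
          = ENNReal.ofReal r * Mq ^ (r-1) := by
        simp only [hkdef]
        rw [ENNReal.ofReal_mul (le_of_lt hr0), ← ENNReal.ofReal_rpow_of_pos hlam,
          div_eq_mul_inv, ENNReal.mul_rpow_of_nonneg _ _ hr1, ENNReal.inv_rpow]
        calc ENNReal.ofReal r * ENNReal.ofReal lam ^ (r-1) *
              (Mq ^ (r-1) * (ENNReal.ofReal lam ^ (r-1))⁻¹)
            = ENNReal.ofReal r * Mq ^ (r-1) *
              (ENNReal.ofReal lam ^ (r-1) * (ENNReal.ofReal lam ^ (r-1))⁻¹) := by ring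
          _ = ENNReal.ofReal r * Mq ^ (r-1) := by
              rw [ENNReal.mul_inv_cancel hd0 hdt, mul_one]
      rw [hpull, hIeq]
      calc k lam * ∫⁻ x in A, w x ^ pR
          ≤ k lam * (E0 ^ pR * ((Mq / ENNReal.ofReal lam) ^ (r-1) * Uq tau)) := by
            refine mul_le_mul_right ((hIle.trans hWtau).trans ?_) _
            exact mul_le_mul_right hUr _
        _ = (k lam * (Mq / ENNReal.ofReal lam) ^ (r-1)) * (E0 ^ pR * Uq tau) := by ring
        _ = (ENNReal.ofReal r * Mq ^ (r-1)) * (E0 ^ pR * Uq tau) := by rw [halg]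
        _ ≤ (ENNReal.ofReal r * Mq ^ (r-1)) * (E0 ^ pR * J lam) :=
            mul_le_mul_right (mul_le_mul_right hUJ _) _
        _ = (ENNReal.ofReal r * (E0 ^ pR * Mq ^ (r-1))) * J lam := by ring
  -- Step F : the J-integral is at most Mq
  have hF2 : (∫⁻ lam in Ioi (0:ℝ), J lam) ≤ Mq := by
    have hswap : (∫⁻ lam in Ioi (0:ℝ), J lam)
        = ∫⁻ x in Ioi (0:ℝ), ∫⁻ lam in Ioi (0:ℝ),
            u x ^ qR * (if ENNReal.ofReal lam < S g x ^ qR then 1 else 0) :=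
      lintegral_lintegral_swap hJm.aemeasurable
    rw [hswap]
    have hinner : ∀ x : ℝ, (∫⁻ lam in Ioi (0:ℝ),
        u x ^ qR * (if ENNReal.ofReal lam < S g x ^ qR then (1:ℝ≥0∞) else 0))
        = (u x * S g x) ^ qR := by
      intro x
      rw [lintegral_const_mul _ (Measurable.ite
          (measurableSet_lt ENNReal.measurable_ofReal measurable_const)
          measurable_const measurable_const),
        vol_layer (S g x ^ qR), ENNReal.mul_rpow_of_nonneg _ _ (le_of_lt hqR)]
    exact le_of_eq (lintegral_congr hinner)
  -- Mq^{r-1} * Mq ≤ Mq^r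
  have hMqr : Mq ^ (r-1) * Mq ≤ Mq ^ r := by
    rcases eq_or_ne Mq 0 with h0 | h0
    · rw [h0, mul_zero]; exact zero_le
    rcases eq_or_ne Mq ∞ with hti | hti
    · rw [hti, ENNReal.top_rpow_of_pos hr0]; exact le_top
    · rw [show r = (r-1)+1 by ring, ENNReal.rpow_add _ _ h0 hti, ENNReal.rpow_one,
        sub_add_cancel]
  -- final combination
  rw [hRHS]
  refine hB.trans ?_
  have htot : (∫⁻ x in Ioi (0:ℝ), phi g x ^ pR * w x ^ pR)
      ≤ ENNReal.ofReal r * (E0 ^ pR * Mq ^ (r-1)) * Mq := by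
    refine hC.trans ?_
    have h1 : (∫⁻ lam in Ioi (0:ℝ), ∫⁻ x in Ioi (0:ℝ), F lam x)
        ≤ ∫⁻ lam in Ioi (0:ℝ), (ENNReal.ofReal r * (E0 ^ pR * Mq ^ (r-1))) * J lam := by
      refine lintegral_mono_ae ?_
      filter_upwards [ae_restrict_mem measurableSet_Ioi] with lam hlam
      exact hD lam (mem_Ioi.mp hlam)
    refine h1.trans ?_
    rw [lintegral_const_mul _ hJmeas]
    exact mul_le_mul_right hF2 _
  calc (∫⁻ x in Ioi (0:ℝ), phi g x ^ pR * w x ^ pR) ^ (1/pR)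
      ≤ (ENNReal.ofReal r * (E0 ^ pR * Mq ^ (r-1)) * Mq) ^ (1/pR) :=
        ENNReal.rpow_le_rpow htot (by positivity)
    _ ≤ (ENNReal.ofReal r * (E0 * Mq ^ (1/qR)) ^ pR) ^ (1/pR) := by
        refine ENNReal.rpow_le_rpow ?_ (by positivity)
        rw [ENNReal.mul_rpow_of_nonneg _ _ (le_of_lt hpR), ← ENNReal.rpow_mul,
          (show 1/qR * pR = r by rw [hrdef]; ring)]
        calc ENNReal.ofReal r * (E0 ^ pR * Mq ^ (r-1)) * Mq
            = ENNReal.ofReal r * (E0 ^ pR * (Mq ^ (r-1) * Mq)) := by ring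
          _ ≤ ENNReal.ofReal r * (E0 ^ pR * Mq ^ r) :=
              mul_le_mul_right (mul_le_mul_right hMqr _) _
    _ = ENNReal.ofReal r ^ (1/pR) * (E0 * Mq ^ (1/qR)) := by
        rw [ENNReal.mul_rpow_of_nonneg _ _ (by positivity), ← ENNReal.rpow_mul,
          mul_one_div_cancel (ne_of_gt hpR), ENNReal.rpow_one]
    _ = ENNReal.ofReal r ^ (1/pR) * E0 * Mq ^ (1/qR) := by rw [mul_assoc]

end RSH

open RSH in
/-- reverse inequality for the supremal operator `S`, `0 < q ≤ p ≤ ∞`. -/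
theorem reverse_supremal_hardy (p q : ℝ≥0∞) (hq : 0 < q) (hqp : q ≤ p) :
    ∃ c₁ c₂ : ℝ≥0∞, 0 < c₁ ∧ c₂ < ∞ ∧
      ∀ u w : ℝ → ℝ≥0∞, Measurable u → Measurable w →
        (∀ t ∈ Ioi (0:ℝ), wnorm q u (Ioi t) < ∞) →
        (let LHS : (ℝ → ℝ≥0∞) → ℝ≥0∞ := fun g => wnorm p (fun x => g x * w x) (Ioi 0)
         let RHS : (ℝ → ℝ≥0∞) → ℝ≥0∞ := fun g =>
            wnorm q (fun t => u t * essSup g (volume.restrict (Ioo (0:ℝ) t))) (Ioi 0)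
         let E : ℝ≥0∞ := ⨆ t ∈ Ioi (0:ℝ), wnorm p w (Ioi t) * (wnorm q u (Ioi t))⁻¹
         let best : ℝ≥0∞ := ⨆ g : {g : ℝ → ℝ≥0∞ // Measurable g}, LHS g.1 / RHS g.1
         ((∃ c : ℝ≥0∞, c < ∞ ∧ ∀ g : ℝ → ℝ≥0∞, Measurable g → LHS g ≤ c * RHS g) ↔ E < ∞)
           ∧ c₁ * E ≤ best ∧ best ≤ c₂ * E) := by
  classical
  -- the constant c₂
  set c₂ : ℝ≥0∞ := (if p = ∞ then 1 else
    ENNReal.ofReal (p.toReal / q.toReal) ^ (1 / p.toReal)) with hc₂def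
  have hc₂1 : 1 ≤ c₂ := by
    rw [hc₂def]
    split_ifs with hp
    · exact le_rfl
    · have hqt : q ≠ ∞ := fun h => hp (top_le_iff.mp (h ▸ hqp))
      have hpR : 0 < p.toReal := ENNReal.toReal_pos (ne_of_gt (lt_of_lt_of_le hq hqp)) hp
      have hqR : 0 < q.toReal := ENNReal.toReal_pos (ne_of_gt hq) hqt
      have h1 : (1:ℝ) ≤ p.toReal / q.toReal :=
        (one_le_div hqR).mpr (ENNReal.toReal_mono hp hqp)
      refine ENNReal.one_le_rpow ?_ (by positivity)
      rw [show (1:ℝ≥0∞) = ENNReal.ofReal 1 by simp]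
      exact ENNReal.ofReal_le_ofReal h1
  have hc₂top : c₂ < ∞ := by
    rw [hc₂def]
    split_ifs with hp
    · exact one_lt_top
    · exact ENNReal.rpow_lt_top_of_nonneg (by positivity) ENNReal.ofReal_ne_top
  refine ⟨1, c₂, zero_lt_one, hc₂top, ?_⟩
  intro u w hu hw hb
  intro LHS RHS E best
  -- main inequality packaged
  have main : E < ∞ → ∀ g : ℝ → ℝ≥0∞, Measurable g → LHS g ≤ c₂ * E * RHS g := by
    intro hE g hg
    have hE' : ∀ t ∈ Ioi (0:ℝ), wnorm p w (Ioi t) ≤ E * wnorm q u (Ioi t) := by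
      intro t ht
      have h1 : wnorm p w (Ioi t) * (wnorm q u (Ioi t))⁻¹ ≤ E := by
        refine le_trans ?_ (le_iSup₂ (f := fun t (_ : t ∈ Ioi (0:ℝ)) =>
          wnorm p w (Ioi t) * (wnorm q u (Ioi t))⁻¹) t ht)
        exact le_rfl
      rcases eq_or_ne (wnorm q u (Ioi t)) 0 with h0 | h0
      · rw [h0] at h1
        rw [h0]
        have : wnorm p w (Ioi t) = 0 := by
          by_contra hne
          rw [ENNReal.inv_zero, ENNReal.mul_top hne] at h1
          exact absurd (lt_of_le_of_lt h1 hE) (lt_irrefl _)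
        simp [this]
      · have hfin : wnorm q u (Ioi t) ≠ ∞ := (hb t ht).ne
        calc wnorm p w (Ioi t)
            = wnorm p w (Ioi t) * (wnorm q u (Ioi t))⁻¹ * wnorm q u (Ioi t) := by
              rw [mul_assoc, ENNReal.inv_mul_cancel h0 hfin, mul_one]
          _ ≤ E * wnorm q u (Ioi t) := mul_le_mul_left h1 _
    rcases eq_or_ne p ∞ with hp | hp
    · subst hp
      have := main_top q hq u w g hu hw hg E hE'
      calc LHS g ≤ E * RHS g := this
        _ ≤ c₂ * E * RHS g := by
            rw [mul_assoc]
            exact le_mul_of_one_le_left (zero_le) hc₂1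
    · have := main_fin p q hq hqp hp u w g hu hw hg E hE'
      calc LHS g ≤ ENNReal.ofReal (p.toReal / q.toReal) ^ (1 / p.toReal) * E * RHS g := this
        _ = c₂ * E * RHS g := by rw [hc₂def, if_neg hp]
  -- test functions give `E ≤ best` and the forward implication
  have htest : ∀ t ∈ Ioi (0:ℝ), ∃ g : ℝ → ℝ≥0∞, Measurable g ∧
      LHS g = wnorm p w (Ioi t) ∧ RHS g = wnorm q u (Ioi t) := by
    intro t ht
    refine ⟨fun x => if t < x then 1 else 0, Measurable.ite measurableSet_Ioi
      measurable_const measurable_const, ?_, ?_⟩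
    · exact wnorm_indicator_mul p (lt_of_lt_of_le hq hqp) w hw ht
    · have : RHS (fun x => if t < x then (1:ℝ≥0∞) else 0)
          = wnorm q (fun x => (if t < x then (1:ℝ≥0∞) else 0) * u x) (Ioi 0) := by
        simp only [RHS]
        rcases eq_or_ne q ∞ with hq' | hq'
        · subst hq'
          simp only [wnorm, if_pos rfl]
          refine essSup_congr_ae ?_
          filter_upwards [ae_restrict_mem measurableSet_Ioi] with s hs
          rw [show essSup (fun x => if t < x then (1:ℝ≥0∞) else 0)
              (volume.restrict (Ioo 0 s)) = S (fun x => if t < x then (1:ℝ≥0∞) else 0) s from rfl,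
            S_indicator ht hs, mul_comm]
        · simp only [wnorm, if_neg hq']
          congr 1
          refine setLIntegral_congr_fun measurableSet_Ioi ?_
          intro s hs
          dsimp only
          rw [show essSup (fun x => if t < x then (1:ℝ≥0∞) else 0)
              (volume.restrict (Ioo 0 s)) = S (fun x => if t < x then (1:ℝ≥0∞) else 0) s from rfl,
            S_indicator ht hs, mul_comm]
      rw [this, wnorm_indicator_mul q hq u hu ht]
  have hEbest : E ≤ best := by
    refine iSup₂_le fun t ht => ?_
    obtain ⟨g, hgm, hL, hR⟩ := htest t ht
    have : LHS g / RHS g ≤ best := le_iSup (fun g : {g : ℝ → ℝ≥0∞ // Measurable g} =>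
      LHS g.1 / RHS g.1) ⟨g, hgm⟩
    rw [hL, hR, ENNReal.div_eq_inv_mul, mul_comm] at this
    exact this
  refine ⟨⟨?_, ?_⟩, by simpa using hEbest, ?_⟩
  · rintro ⟨c, hc, hineq⟩
    refine lt_of_le_of_lt (iSup₂_le fun t ht => ?_) hc
    obtain ⟨g, hgm, hL, hR⟩ := htest t ht
    have h1 := hineq g hgm
    rw [hL, hR] at h1
    rcases eq_or_ne (wnorm q u (Ioi t)) 0 with h0 | h0
    · rw [h0] at h1
      rw [h0]
      simp only [mul_zero, nonpos_iff_eq_zero] at h1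
      simp [h1]
    · have hfin : wnorm q u (Ioi t) ≠ ∞ := (hb t ht).ne
      calc wnorm p w (Ioi t) * (wnorm q u (Ioi t))⁻¹
          ≤ c * wnorm q u (Ioi t) * (wnorm q u (Ioi t))⁻¹ := mul_le_mul_left h1 _
        _ = c := by rw [mul_assoc, ENNReal.mul_inv_cancel h0 hfin, mul_one]
  · intro hE
    exact ⟨c₂ * E, ENNReal.mul_lt_top hc₂top hE, main hE⟩
  · rcases eq_or_ne E ∞ with hE | hE
    · rw [hE, ENNReal.mul_top (by intro h; rw [h] at hc₂1; exact absurd hc₂1 (by simp))]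
      exact le_top
    · refine iSup_le fun g => ?_
      rcases eq_or_ne (RHS g.1) ∞ with hR | hR
      · rw [hR, ENNReal.div_top]
        exact zero_le
      · rw [ENNReal.div_le_iff_le_mul (Or.inr (ENNReal.mul_ne_top hc₂top.ne hE)) (Or.inl hR)]
        calc LHS g.1 ≤ c₂ * E * RHS g.1 := main (lt_top_iff_ne_top.mpr hE) g.1 g.2
          _ = RHS g.1 * (c₂ * E) := mul_comm _ _
          _ ≤ c₂ * E * RHS g.1 := le_of_eq (mul_comm _ _)
end
end

section
/- Let 0 < q ≤ p ≤ ∞ and let u, w be nonnegative measurable functions on (0,∞) with ‖u‖_{L^q(0,t)} < ∞ for all t > 0. Then ‖g‖_{L^p(w)} ≤ c ‖ t ↦ ess sup_{x∈(t,∞)} g(x) ‖_{L^q(u)} holds for all nonnegative measurable g if and only if E* = sup_{t>0} ‖w‖_{L^p(0,t)} ‖u‖_{L^q(0,t)}^{−1} < ∞, and the best constant satisfies c ≈ E*. -/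
open MeasureTheory ENNReal Set

noncomputable section

namespace RSCAux

open Filter


/-- `∫⁻ x in (0,b), r x^(r-1) dx = b^r`. -/
lemma lint_pow {r : ℝ} (hr : 0 < r) {b : ℝ} (hb : 0 ≤ b) :
    ∫⁻ x in Ioo (0:ℝ) b, ENNReal.ofReal (r * x ^ (r-1)) = ENNReal.ofReal (b ^ r) := by
  rw [show (volume.restrict (Ioo (0:ℝ) b)) = volume.restrict (Ioc 0 b) from
    Measure.restrict_congr_set Ioo_ae_eq_Ioc]
  have hint : IntegrableOn (fun x => r * x ^ (r-1)) (Ioc 0 b) volume := by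
    have := (intervalIntegral.intervalIntegrable_rpow' (a := 0) (b := b) (r := r-1) (by linarith)).const_mul r
    rwa [intervalIntegrable_iff_integrableOn_Ioc_of_le hb] at this
  rw [← ofReal_integral_eq_lintegral_ofReal hint]
  · congr 1
    rw [← intervalIntegral.integral_of_le hb]
    rw [intervalIntegral.integral_const_mul, integral_rpow (Or.inl (by linarith))]
    have : r - 1 + 1 = r := by ring
    rw [this, Real.zero_rpow hr.ne']
    field_simp
    rw [sub_zero]
  · filter_upwards [ae_restrict_mem measurableSet_Ioc] with x hx
    have : (0:ℝ) ≤ x ^ (r-1) := Real.rpow_nonneg hx.1.le _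
    positivity

lemma lint_pow_top {r : ℝ} (hr : 0 < r) :
    ∫⁻ x in Ioi (0:ℝ), ENNReal.ofReal (r * x ^ (r-1)) = ⊤ := by
  rw [eq_top_iff]
  have hmono : ∀ n : ℕ, ENNReal.ofReal ((n:ℝ) ^ r)
      ≤ ∫⁻ x in Ioi (0:ℝ), ENNReal.ofReal (r * x ^ (r-1)) := by
    intro n
    rw [← lint_pow hr (Nat.cast_nonneg n)]
    exact lintegral_mono_set Ioo_subset_Ioi_self
  have htend : Tendsto (fun n : ℕ => ENNReal.ofReal ((n:ℝ) ^ r)) atTop (nhds ⊤) :=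
    ENNReal.tendsto_ofReal_atTop.comp ((tendsto_rpow_atTop hr).comp
      tendsto_natCast_atTop_atTop)
  exact le_of_tendsto' htend hmono

/-- Layer cake representation for `ℝ≥0∞`-valued functions. -/
lemma layercake {α : Type*} [MeasurableSpace α] (μ : Measure α) [SFinite μ]
    {f : α → ℝ≥0∞} (hf : Measurable f) {r : ℝ} (hr : 0 < r) :
    ∫⁻ a, f a ^ r ∂μ
      = ∫⁻ t in Ioi (0:ℝ),
          ENNReal.ofReal (r * t ^ (r-1)) * μ {a | ENNReal.ofReal t < f a} := by
  have hpt : ∀ c : ℝ≥0∞, c ^ r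
      = ∫⁻ t in Ioi (0:ℝ), ENNReal.ofReal (r * t ^ (r-1))
          * (if ENNReal.ofReal t < c then 1 else 0) := by
    intro c
    rcases eq_or_ne c ⊤ with hc | hc
    · have : ∀ t : ℝ, ENNReal.ofReal (r * t ^ (r-1)) * (if ENNReal.ofReal t < c then 1 else 0)
          = ENNReal.ofReal (r * t ^ (r-1)) := by
        intro t; rw [if_pos (hc ▸ ofReal_lt_top), mul_one]
      rw [lintegral_congr this, lint_pow_top hr, hc, ENNReal.top_rpow_of_pos hr]
    · have key : ∀ t : ℝ, t ∈ Ioi (0:ℝ) →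
          ENNReal.ofReal (r * t ^ (r-1)) * (if ENNReal.ofReal t < c then 1 else 0)
          = (Ioo (0:ℝ) c.toReal).indicator (fun t => ENNReal.ofReal (r * t ^ (r-1))) t := by
        intro t ht
        by_cases h : ENNReal.ofReal t < c
        · rw [if_pos h, mul_one, Set.indicator_of_mem]
          exact ⟨ht, (ENNReal.ofReal_lt_iff_lt_toReal (le_of_lt ht) hc).1 h⟩
        · rw [if_neg h, mul_zero, Set.indicator_of_notMem]
          intro hmem
          exact h ((ENNReal.ofReal_lt_iff_lt_toReal (le_of_lt ht) hc).2 hmem.2)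
      rw [setLIntegral_congr_fun_ae measurableSet_Ioi (ae_of_all _ key)]
      rw [lintegral_indicator measurableSet_Ioo, Measure.restrict_restrict measurableSet_Ioo,
        Set.inter_eq_left.2 (fun x hx => hx.1)]
      rw [lint_pow hr ENNReal.toReal_nonneg]
      rw [← ENNReal.ofReal_rpow_of_nonneg ENNReal.toReal_nonneg hr.le,
        ENNReal.ofReal_toReal hc]
  have hmeas : Measurable (fun p : α × ℝ =>
      ENNReal.ofReal (r * p.2 ^ (r-1)) * (if ENNReal.ofReal p.2 < f p.1 then 1 else 0)) := by
    apply Measurable.mul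
    · exact measurable_ofReal.comp ((measurable_const.mul
        (measurable_id.pow_const (r-1))).comp measurable_snd)
    · exact Measurable.ite
        (measurableSet_lt (measurable_ofReal.comp measurable_snd) (hf.comp measurable_fst))
        measurable_const measurable_const
  calc ∫⁻ a, f a ^ r ∂μ
      = ∫⁻ a, (∫⁻ t in Ioi (0:ℝ), ENNReal.ofReal (r * t ^ (r-1))
          * (if ENNReal.ofReal t < f a then 1 else 0)) ∂μ :=
        lintegral_congr fun a => hpt (f a)
    _ = ∫⁻ t in Ioi (0:ℝ), ∫⁻ a, ENNReal.ofReal (r * t ^ (r-1))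
          * (if ENNReal.ofReal t < f a then 1 else 0) ∂μ :=
        lintegral_lintegral_swap hmeas.aemeasurable
    _ = ∫⁻ t in Ioi (0:ℝ), ENNReal.ofReal (r * t ^ (r-1)) * μ {a | ENNReal.ofReal t < f a} := by
        apply lintegral_congr; intro t
        rw [lintegral_const_mul _ (Measurable.ite
          (measurableSet_lt measurable_const hf) measurable_const measurable_const)]
        congr 1
        rw [← lintegral_indicator_one (measurableSet_lt measurable_const hf)]
        apply lintegral_congr; intro a
        simp [Set.indicator_apply]


lemma rpow_sub_one_mul {a : ℝ≥0∞} {c : ℝ} (hc : 1 ≤ c) : a ^ (c - 1) * a = a ^ c := by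
  nth_rewrite 2 [← ENNReal.rpow_one a]
  rw [← ENNReal.rpow_add_of_nonneg _ _ (by linarith) zero_le_one, sub_add_cancel]

/-- From `Wn * Un⁻¹ ≤ E`, `Un ≠ ⊤`, `E ≠ ⊤`, deduce `Wn ≤ E * Un`. -/
lemma cond_of_E {E Wn Un : ℝ≥0∞} (hE : E ≠ ⊤) (hUn : Un ≠ ⊤) (h : Wn * Un⁻¹ ≤ E) :
    Wn ≤ E * Un := by
  rcases eq_or_ne Un 0 with h0 | h0
  · subst h0
    rw [ENNReal.inv_zero] at h
    rcases eq_or_ne Wn 0 with hW | hW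
    · simp [hW]
    · rw [ENNReal.mul_top hW] at h
      exact absurd (top_le_iff.1 (le_of_eq (top_le_iff.1 h).symm)) hE
  · calc Wn = Wn * Un⁻¹ * Un := by
          rw [mul_assoc, ENNReal.inv_mul_cancel h0 hUn, mul_one]
    _ ≤ E * Un := mul_le_mul_left h Un

/-- Cancel a positive finite factor. -/
lemma le_mul_of_forall {E : ℝ≥0∞} (hE : E ≠ ⊤) {ι : Sort*} [Nonempty ι] {a : ι → ℝ≥0∞}
    {x : ℝ≥0∞} (h : ∀ i, x ≤ E * a i) : x ≤ E * ⨅ i, a i := by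
  rcases eq_or_ne E 0 with h0 | h0
  · simpa [h0] using h (Classical.arbitrary ι)
  · have : x * E⁻¹ ≤ ⨅ i, a i := by
      refine le_iInf fun i => ?_
      calc x * E⁻¹ ≤ E * a i * E⁻¹ := mul_le_mul_left (h i) _
        _ = a i := by rw [mul_comm E (a i), mul_assoc, ENNReal.mul_inv_cancel h0 hE, mul_one]
    calc x = x * E⁻¹ * E := by rw [mul_assoc, ENNReal.inv_mul_cancel h0 hE, mul_one]
      _ ≤ (⨅ i, a i) * E := mul_le_mul_left this E
      _ = E * ⨅ i, a i := mul_comm _ _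

/-- `(⨅ aᵢ)^(1/s) ≥ ⨅ (aᵢ^(1/s))`, elementary direction used. -/
lemma iInf_rpow_le {ι : Sort*} [Nonempty ι] (a : ι → ℝ≥0∞) {s : ℝ} (hs : 0 < s) :
    ⨅ i, (a i) ^ (1/s) ≤ (⨅ i, a i) ^ (1/s) := by
  have h1 : (⨅ i, (a i) ^ (1/s)) ^ s ≤ ⨅ i, a i := by
    refine le_iInf fun i => ?_
    calc (⨅ j, (a j) ^ (1/s)) ^ s ≤ ((a i) ^ (1/s)) ^ s :=
          ENNReal.rpow_le_rpow (iInf_le _ i) hs.le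
      _ = a i := by rw [← ENNReal.rpow_mul, one_div_mul_cancel hs.ne', ENNReal.rpow_one]
  calc ⨅ i, (a i) ^ (1/s)
      = ((⨅ i, (a i) ^ (1/s)) ^ s) ^ (1/s) := by
        rw [← ENNReal.rpow_mul, mul_one_div_cancel hs.ne', ENNReal.rpow_one]
    _ ≤ (⨅ i, a i) ^ (1/s) := ENNReal.rpow_le_rpow h1 (by positivity)

/-- Measure of a downward-closed subset of `(0,∞)` is a sup over initial intervals. -/
lemma meas_downward {m : Measure ℝ} (hm : ∀ x : ℝ, m {x} = 0) {T : Set ℝ}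
    (hT0 : T ⊆ Ioi 0) (hT : ∀ ⦃x y : ℝ⦄, x ∈ T → 0 < y → y < x → y ∈ T) :
    m T ≤ ⨆ t ∈ T, m (Ioo 0 t) := by
  classical
  set Q : Set ℚ := {t : ℚ | (t:ℝ) ∈ T} with hQ
  have hsub : T ⊆ (⋃ t : Q, Ioo (0:ℝ) (t:ℝ)) ∪ (T \ ⋃ t : Q, Ioo (0:ℝ) (t:ℝ)) := by
    intro x hx
    by_cases h : x ∈ ⋃ t : Q, Ioo (0:ℝ) (t:ℝ)
    · exact Or.inl h
    · exact Or.inr ⟨hx, h⟩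
  have hdiff : (T \ ⋃ t : Q, Ioo (0:ℝ) (t:ℝ)).Subsingleton := by
    intro x hx y hy
    by_contra hne
    wlog hxy : x < y generalizing x y
    · exact this hy hx (Ne.symm hne) (lt_of_le_of_ne (not_lt.1 hxy) (Ne.symm hne))
    · obtain ⟨z, hz1, hz2⟩ := exists_rat_btwn hxy
      have hzT : (z:ℝ) ∈ T := hT hy.1 (lt_trans (hT0 hx.1) hz1) hz2
      exact hx.2 (mem_iUnion.2 ⟨⟨z, hzT⟩, ⟨hT0 hx.1, hz1⟩⟩)
  have hdiff0 : m (T \ ⋃ t : Q, Ioo (0:ℝ) (t:ℝ)) = 0 := by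
    rcases hdiff.eq_empty_or_singleton with h | ⟨x, h⟩
    · rw [h]; exact measure_empty
    · rw [h]; exact hm x
  have hQc : Countable Q := Set.to_countable Q |>.to_subtype
  calc m T ≤ m ((⋃ t : Q, Ioo (0:ℝ) (t:ℝ)) ∪ (T \ ⋃ t : Q, Ioo (0:ℝ) (t:ℝ))) :=
        measure_mono hsub
    _ ≤ m (⋃ t : Q, Ioo (0:ℝ) (t:ℝ)) + m (T \ ⋃ t : Q, Ioo (0:ℝ) (t:ℝ)) := measure_union_le _ _
    _ = m (⋃ t : Q, Ioo (0:ℝ) (t:ℝ)) := by rw [hdiff0, add_zero]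
    _ = ⨆ t : Q, m (Ioo (0:ℝ) (t:ℝ)) := by
        apply Directed.measure_iUnion
        intro i j
        rcases le_total (i:ℚ) (j:ℚ) with h | h
        · exact ⟨j, fun x hx => ⟨hx.1, lt_of_lt_of_le hx.2 (by exact_mod_cast h)⟩, subset_rfl⟩
        · exact ⟨i, subset_rfl, fun x hx => ⟨hx.1, lt_of_lt_of_le hx.2 (by exact_mod_cast h)⟩⟩
    _ ≤ ⨆ t ∈ T, m (Ioo 0 t) := by
        refine iSup_le fun t => ?_
        exact le_iSup₂ (f := fun t (_ : t ∈ T) => m (Ioo (0:ℝ) t)) (t:ℝ) t.2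


/-- The key Hardy-type inequality for antitone `Φ`, `0 < s ≤ r`. -/
lemma phi_ineq {Φ : ℝ → ℝ≥0∞} (hΦ : Antitone Φ) {r s : ℝ} (hs : 0 < s) (hsr : s ≤ r) :
    ∫⁻ l in Ioi (0:ℝ), ENNReal.ofReal (r * l ^ (r-1)) * Φ l ^ (r/s)
      ≤ ENNReal.ofReal (r/s)
        * (∫⁻ l in Ioi (0:ℝ), ENNReal.ofReal (s * l ^ (s-1)) * Φ l) ^ (r/s) := by
  have hr : 0 < r := lt_of_lt_of_le hs hsr
  have hrs1 : 1 ≤ r/s := (one_le_div hs).2 hsr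
  set A := ∫⁻ l in Ioi (0:ℝ), ENNReal.ofReal (s * l ^ (s-1)) * Φ l with hA
  rcases eq_or_ne A ⊤ with hAt | hAt
  · rw [hAt]
    rw [ENNReal.top_rpow_of_pos (by linarith), ENNReal.mul_top (by positivity)]
    exact le_top
  -- key pointwise bound
  have key : ∀ l : ℝ, 0 < l → ENNReal.ofReal (l ^ s) * Φ l ≤ A := by
    intro l hl
    have h1 : ENNReal.ofReal (l ^ s) * Φ l
        = ∫⁻ t in Ioo (0:ℝ) l, ENNReal.ofReal (s * t ^ (s-1)) * Φ l := by
      rw [lintegral_mul_const, lint_pow hs hl.le]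
      exact measurable_ofReal.comp ((measurable_const.mul (measurable_id.pow_const (s-1))))
    rw [h1]
    calc ∫⁻ t in Ioo (0:ℝ) l, ENNReal.ofReal (s * t ^ (s-1)) * Φ l
        ≤ ∫⁻ t in Ioo (0:ℝ) l, ENNReal.ofReal (s * t ^ (s-1)) * Φ t := by
          apply setLIntegral_mono' measurableSet_Ioo
          intro t ht
          exact mul_le_mul_right (hΦ ht.2.le) _
      _ ≤ A := lintegral_mono_set (fun t ht => ht.1)
  -- pointwise domination of the integrand
  have hptw : ∀ l : ℝ, l ∈ Ioi (0:ℝ) → ENNReal.ofReal (r * l ^ (r-1)) * Φ l ^ (r/s)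
      ≤ A ^ (r/s - 1) * (ENNReal.ofReal (r/s) * (ENNReal.ofReal (s * l ^ (s-1)) * Φ l)) := by
    intro l hl
    have hl' : (0:ℝ) < l := hl
    have hΦle : Φ l ≤ A * (ENNReal.ofReal (l ^ s))⁻¹ := by
      have h0 : ENNReal.ofReal (l ^ s) ≠ 0 := by
        simp [ENNReal.ofReal_eq_zero, not_le]
        positivity
      calc Φ l = ENNReal.ofReal (l ^ s) * Φ l * (ENNReal.ofReal (l ^ s))⁻¹ := by
            rw [mul_comm (ENNReal.ofReal (l ^ s)) (Φ l), mul_assoc,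
              ENNReal.mul_inv_cancel h0 ofReal_ne_top, mul_one]
        _ ≤ A * (ENNReal.ofReal (l ^ s))⁻¹ := mul_le_mul_left (key l hl') _
    have hsplit : Φ l ^ (r/s) = Φ l ^ (r/s - 1) * Φ l := (rpow_sub_one_mul hrs1).symm
    have hpow : Φ l ^ (r/s - 1) ≤ A ^ (r/s - 1) * (ENNReal.ofReal (l ^ s))⁻¹ ^ (r/s - 1) := by
      rw [← ENNReal.mul_rpow_of_nonneg _ _ (by linarith)]
      exact ENNReal.rpow_le_rpow hΦle (by linarith)
    have hc : ENNReal.ofReal (r * l ^ (r-1)) * (ENNReal.ofReal (l ^ s))⁻¹ ^ (r/s - 1)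
        = ENNReal.ofReal (r/s) * ENNReal.ofReal (s * l ^ (s-1)) := by
      rw [ENNReal.inv_rpow, ← ENNReal.rpow_neg]
      rw [← ENNReal.ofReal_rpow_of_pos (by positivity)]
      rw [← ENNReal.rpow_mul]
      have hexp : s * -(r/s - 1) = s - r := by field_simp; ring
      rw [hexp, ENNReal.ofReal_rpow_of_pos hl']
      rw [← ENNReal.ofReal_mul (by positivity), ← ENNReal.ofReal_mul (by positivity)]
      congr 1
      rw [mul_assoc, ← Real.rpow_add hl']
      have : r - 1 + (s - r) = s - 1 := by ring
      rw [this]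
      field_simp
    calc ENNReal.ofReal (r * l ^ (r-1)) * Φ l ^ (r/s)
        = ENNReal.ofReal (r * l ^ (r-1)) * (Φ l ^ (r/s - 1) * Φ l) := by rw [hsplit]
      _ ≤ ENNReal.ofReal (r * l ^ (r-1))
            * ((A ^ (r/s - 1) * (ENNReal.ofReal (l ^ s))⁻¹ ^ (r/s - 1)) * Φ l) :=
          mul_le_mul_right (mul_le_mul_left hpow _) _
      _ = A ^ (r/s - 1) * ((ENNReal.ofReal (r * l ^ (r-1))
            * (ENNReal.ofReal (l ^ s))⁻¹ ^ (r/s - 1)) * Φ l) := by ring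
      _ = A ^ (r/s - 1) * (ENNReal.ofReal (r/s)
            * (ENNReal.ofReal (s * l ^ (s-1)) * Φ l)) := by rw [hc, mul_assoc]
  calc ∫⁻ l in Ioi (0:ℝ), ENNReal.ofReal (r * l ^ (r-1)) * Φ l ^ (r/s)
      ≤ ∫⁻ l in Ioi (0:ℝ), A ^ (r/s - 1)
          * (ENNReal.ofReal (r/s) * (ENNReal.ofReal (s * l ^ (s-1)) * Φ l)) :=
        setLIntegral_mono' measurableSet_Ioi hptw
    _ = A ^ (r/s - 1) * ENNReal.ofReal (r/s) * A := by
        have hconst : A ^ (r/s - 1) * ENNReal.ofReal (r/s) ≠ ⊤ :=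
          ENNReal.mul_ne_top (ENNReal.rpow_ne_top_of_nonneg (by linarith) hAt) ofReal_ne_top
        have hre : ∀ l : ℝ, A ^ (r/s - 1)
            * (ENNReal.ofReal (r/s) * (ENNReal.ofReal (s * l ^ (s-1)) * Φ l))
            = (A ^ (r/s - 1) * ENNReal.ofReal (r/s))
              * (ENNReal.ofReal (s * l ^ (s-1)) * Φ l) := fun l => by ring
        rw [lintegral_congr hre, lintegral_const_mul' _ _ hconst]
    _ = ENNReal.ofReal (r/s) * A ^ (r/s) := by
        rw [mul_comm (A ^ (r/s - 1)) (ENNReal.ofReal (r/s)), mul_assoc, rpow_sub_one_mul hrs1]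

/-- Core inequality, both exponents finite. -/
lemma core_fin {u w H : ℝ → ℝ≥0∞} (hu : Measurable u) (hw : Measurable w)
    (hH : Measurable H) (hHa : Antitone H) {r s : ℝ} (hs : 0 < s) (hsr : s ≤ r)
    {E : ℝ≥0∞} (hE : E ≠ ⊤)
    (hcond : ∀ t : ℝ, 0 < t →
      ∫⁻ x in Ioo (0:ℝ) t, w x ^ r ≤ E ^ r * (∫⁻ x in Ioo (0:ℝ) t, u x ^ s) ^ (r/s)) :
    ∫⁻ x in Ioi (0:ℝ), H x ^ r * w x ^ r
      ≤ ENNReal.ofReal (r/s) * E ^ r * (∫⁻ x in Ioi (0:ℝ), H x ^ s * u x ^ s) ^ (r/s) := by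
  have hr : 0 < r := lt_of_lt_of_le hs hsr
  set μw : Measure ℝ := (volume.restrict (Ioi 0)).withDensity (fun x => w x ^ r) with hμw
  set μu : Measure ℝ := (volume.restrict (Ioi 0)).withDensity (fun x => u x ^ s) with hμu
  have hwr : Measurable (fun x => w x ^ r) := hw.pow_const r
  have hus : Measurable (fun x => u x ^ s) := hu.pow_const s
  have hμw_apply : ∀ ⦃T : Set ℝ⦄, MeasurableSet T → μw T = ∫⁻ x in T ∩ Ioi 0, w x ^ r := by
    intro T hT
    rw [hμw, withDensity_apply _ hT, Measure.restrict_restrict hT]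
  have hμu_apply : ∀ ⦃T : Set ℝ⦄, MeasurableSet T → μu T = ∫⁻ x in T ∩ Ioi 0, u x ^ s := by
    intro T hT
    rw [hμu, withDensity_apply _ hT, Measure.restrict_restrict hT]
  -- measure of level sets
  have hTmeas : ∀ l : ℝ, MeasurableSet {x : ℝ | ENNReal.ofReal l < H x} :=
    fun l => measurableSet_lt measurable_const hH
  have hlevel : ∀ l : ℝ, μw {x | ENNReal.ofReal l < H x}
      ≤ E ^ r * (μu {x | ENNReal.ofReal l < H x}) ^ (r/s) := by
    intro l
    set T : Set ℝ := {x | ENNReal.ofReal l < H x} ∩ Ioi 0 with hT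
    have hTsub : T ⊆ Ioi 0 := fun x hx => hx.2
    have hTdc : ∀ ⦃x y : ℝ⦄, x ∈ T → 0 < y → y < x → y ∈ T := by
      intro x y hx hy hyx
      exact ⟨lt_of_lt_of_le hx.1 (hHa hyx.le), hy⟩
    have hatom : ∀ x : ℝ, μw {x} = 0 := by
      intro x
      rw [hμw, withDensity_apply _ (measurableSet_singleton x)]
      apply setLIntegral_measure_zero
      rw [Measure.restrict_apply (measurableSet_singleton x)]
      exact measure_mono_null Set.inter_subset_left (measure_singleton x)
    have h1 : μw {x | ENNReal.ofReal l < H x} = μw T := by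
      rw [hμw_apply (hTmeas l)]
      rw [hμw, withDensity_apply _ ((hTmeas l).inter measurableSet_Ioi),
        Measure.restrict_restrict ((hTmeas l).inter measurableSet_Ioi)]
      congr 1
      rw [Set.inter_assoc, Set.inter_self]
    have h2 : μu {x | ENNReal.ofReal l < H x} = μu T := by
      rw [hμu_apply (hTmeas l)]
      rw [hμu, withDensity_apply _ ((hTmeas l).inter measurableSet_Ioi),
        Measure.restrict_restrict ((hTmeas l).inter measurableSet_Ioi)]
      congr 1
      rw [Set.inter_assoc, Set.inter_self]
    rw [h1, h2]
    calc μw T ≤ ⨆ t ∈ T, μw (Ioo 0 t) := meas_downward hatom hTsub hTdc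
      _ ≤ E ^ r * (μu T) ^ (r/s) := by
        refine iSup₂_le fun t ht => ?_
        have ht0 : 0 < t := hTsub ht
        have hIoo : μw (Ioo 0 t) = ∫⁻ x in Ioo (0:ℝ) t, w x ^ r := by
          rw [hμw_apply measurableSet_Ioo, Set.inter_eq_left.2 (fun x hx => hx.1)]
        have hIoo' : μu (Ioo 0 t) = ∫⁻ x in Ioo (0:ℝ) t, u x ^ s := by
          rw [hμu_apply measurableSet_Ioo, Set.inter_eq_left.2 (fun x hx => hx.1)]
        calc μw (Ioo 0 t) = ∫⁻ x in Ioo (0:ℝ) t, w x ^ r := hIoo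
          _ ≤ E ^ r * (∫⁻ x in Ioo (0:ℝ) t, u x ^ s) ^ (r/s) := hcond t ht0
          _ = E ^ r * (μu (Ioo 0 t)) ^ (r/s) := by rw [hIoo']
          _ ≤ E ^ r * (μu T) ^ (r/s) := by
            apply mul_le_mul_right
            apply ENNReal.rpow_le_rpow _ (by positivity)
            apply measure_mono
            intro y hy
            exact hTdc ht hy.1 hy.2
  -- layer cake on both sides
  have hIw : ∫⁻ x in Ioi (0:ℝ), H x ^ r * w x ^ r = ∫⁻ x, H x ^ r ∂μw := by
    rw [hμw, lintegral_withDensity_eq_lintegral_mul _ hwr (hH.pow_const r)]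
    apply lintegral_congr; intro x; exact (mul_comm _ _)
  have hIu : ∫⁻ x in Ioi (0:ℝ), H x ^ s * u x ^ s = ∫⁻ x, H x ^ s ∂μu := by
    rw [hμu, lintegral_withDensity_eq_lintegral_mul _ hus (hH.pow_const s)]
    apply lintegral_congr; intro x; exact (mul_comm _ _)
  have hΦa : Antitone (fun l : ℝ => μu {x | ENNReal.ofReal l < H x}) := by
    intro l₁ l₂ h
    apply measure_mono
    intro x hx
    exact lt_of_le_of_lt (ofReal_le_ofReal h) hx
  calc ∫⁻ x in Ioi (0:ℝ), H x ^ r * w x ^ r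
      = ∫⁻ l in Ioi (0:ℝ), ENNReal.ofReal (r * l ^ (r-1))
          * μw {x | ENNReal.ofReal l < H x} := by rw [hIw, layercake μw hH hr]
    _ ≤ ∫⁻ l in Ioi (0:ℝ), ENNReal.ofReal (r * l ^ (r-1))
          * (E ^ r * (μu {x | ENNReal.ofReal l < H x}) ^ (r/s)) := by
        apply lintegral_mono; intro l
        exact mul_le_mul_right (hlevel l) _
    _ = E ^ r * ∫⁻ l in Ioi (0:ℝ), ENNReal.ofReal (r * l ^ (r-1))
          * (μu {x | ENNReal.ofReal l < H x}) ^ (r/s) := by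
        have hEr : E ^ r ≠ ⊤ := ENNReal.rpow_ne_top_of_nonneg hr.le hE
        rw [← lintegral_const_mul' _ _ hEr]
        apply lintegral_congr; intro l; ring
    _ ≤ E ^ r * (ENNReal.ofReal (r/s)
          * (∫⁻ l in Ioi (0:ℝ), ENNReal.ofReal (s * l ^ (s-1))
              * μu {x | ENNReal.ofReal l < H x}) ^ (r/s)) :=
        mul_le_mul_right (phi_ineq hΦa hs hsr) _
    _ = ENNReal.ofReal (r/s) * E ^ r * (∫⁻ x in Ioi (0:ℝ), H x ^ s * u x ^ s) ^ (r/s) := by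
        rw [hIu, layercake μu hH hs]; ring

/-- Core inequality, `p = ∞`, `q` finite. -/
lemma core_inf {u w H : ℝ → ℝ≥0∞} (hu : Measurable u) (hH : Measurable H) (hHa : Antitone H)
    {s : ℝ} (hs : 0 < s) {E : ℝ≥0∞} (hE : E ≠ ⊤)
    (hfin : ∀ t : ℝ, 0 < t → ∫⁻ x in Ioo (0:ℝ) t, u x ^ s ≠ ⊤)
    (hcond : ∀ t : ℝ, 0 < t → essSup w (volume.restrict (Ioo 0 t))
      ≤ E * (∫⁻ x in Ioo (0:ℝ) t, u x ^ s) ^ (1/s)) :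
    essSup (fun x => H x * w x) (volume.restrict (Ioi 0))
      ≤ E * (∫⁻ x in Ioi (0:ℝ), H x ^ s * u x ^ s) ^ (1/s) := by
  set A := ∫⁻ x in Ioi (0:ℝ), H x ^ s * u x ^ s with hA
  set μu : Measure ℝ := (volume.restrict (Ioi 0)).withDensity (fun x => u x ^ s) with hμu
  have hus : Measurable (fun x => u x ^ s) := hu.pow_const s
  refine essSup_le_of_ae_le _ ?_
  have h1 : ∀ t : ℚ, ∀ᵐ x ∂volume, x ∈ Ioo (0:ℝ) (t:ℝ) →
      w x ≤ essSup w (volume.restrict (Ioo 0 (t:ℝ))) :=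
    fun t => (ae_restrict_iff' measurableSet_Ioo).1 (ae_le_essSup w)
  have h2 : ∀ᵐ x ∂volume, ∀ t : ℚ, x ∈ Ioo (0:ℝ) (t:ℝ) →
      w x ≤ essSup w (volume.restrict (Ioo 0 (t:ℝ))) := ae_all_iff.2 h1
  filter_upwards [ae_restrict_mem measurableSet_Ioi, ae_restrict_of_ae h2] with x hx0 hx2
  have hx0' : (0:ℝ) < x := hx0
  haveI : Nonempty {t : ℚ // x < (t:ℝ)} := by
    obtain ⟨t, ht⟩ := exists_rat_gt x
    exact ⟨⟨t, ht⟩⟩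
  set ι := {t : ℚ // x < (t:ℝ)}
  have hwx : w x ≤ E * ⨅ t : ι, (∫⁻ y in Ioo (0:ℝ) (t:ℝ), u y ^ s) ^ (1/s) := by
    apply le_mul_of_forall hE
    intro t
    have htpos : (0:ℝ) < (t:ℝ) := lt_trans hx0' t.2
    exact le_trans (hx2 t ⟨hx0', t.2⟩) (hcond _ htpos)
  have hinter : (⋂ t : ι, Ioo (0:ℝ) ((t:ℚ):ℝ)) = Ioc 0 x := by
    ext y
    simp only [mem_iInter, mem_Ioo, mem_Ioc]
    constructor
    · intro h
      obtain ⟨t₀⟩ := (inferInstance : Nonempty ι)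
      refine ⟨(h t₀).1, ?_⟩
      by_contra hxy
      push_neg at hxy
      obtain ⟨z, hz1, hz2⟩ := exists_rat_btwn hxy
      exact absurd (h ⟨z, hz1⟩).2 (not_lt.2 hz2.le)
    · intro h t
      exact ⟨h.1, lt_of_le_of_lt h.2 t.2⟩
  have hstep3 : (⨅ t : ι, ∫⁻ y in Ioo (0:ℝ) ((t:ℚ):ℝ), u y ^ s) = μu (Ioc 0 x) := by
    have happ : ∀ t : ι, μu (Ioo (0:ℝ) ((t:ℚ):ℝ)) = ∫⁻ y in Ioo (0:ℝ) ((t:ℚ):ℝ), u y ^ s := by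
      intro t
      rw [hμu, withDensity_apply _ measurableSet_Ioo, Measure.restrict_restrict measurableSet_Ioo,
        Set.inter_eq_left.2 (fun y hy => hy.1)]
    rw [← hinter]
    rw [Directed.measure_iInter]
    · exact (iInf_congr happ).symm
    · exact fun t => measurableSet_Ioo.nullMeasurableSet
    · intro i j
      rcases le_total (i:ℚ) (j:ℚ) with h | h
      · exact ⟨i, subset_rfl, fun y hy => ⟨hy.1, lt_of_lt_of_le hy.2 (by exact_mod_cast h)⟩⟩
      · exact ⟨j, fun y hy => ⟨hy.1, lt_of_lt_of_le hy.2 (by exact_mod_cast h)⟩, subset_rfl⟩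
    · obtain ⟨t₀⟩ := (inferInstance : Nonempty ι)
      refine ⟨t₀, ?_⟩
      rw [happ t₀]
      exact hfin _ (lt_trans hx0' t₀.2)
  have hstep4 : H x ^ s * μu (Ioc 0 x) ≤ A := by
    have happ : μu (Ioc 0 x) = ∫⁻ y in Ioc (0:ℝ) x, u y ^ s := by
      rw [hμu, withDensity_apply _ measurableSet_Ioc, Measure.restrict_restrict measurableSet_Ioc,
        Set.inter_eq_left.2 (fun y hy => hy.1)]
    rw [happ, ← lintegral_const_mul _ hus]
    calc ∫⁻ y in Ioc (0:ℝ) x, H x ^ s * u y ^ s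
        ≤ ∫⁻ y in Ioc (0:ℝ) x, H y ^ s * u y ^ s := by
          apply setLIntegral_mono' measurableSet_Ioc
          intro y hy
          exact mul_le_mul_left (ENNReal.rpow_le_rpow (hHa hy.2) hs.le) _
      _ ≤ A := lintegral_mono_set (fun y hy => hy.1)
  calc H x * w x
      ≤ H x * (E * ⨅ t : ι, (∫⁻ y in Ioo (0:ℝ) ((t:ℚ):ℝ), u y ^ s) ^ (1/s)) :=
        mul_le_mul_right hwx _
    _ = E * (H x * ⨅ t : ι, (∫⁻ y in Ioo (0:ℝ) ((t:ℚ):ℝ), u y ^ s) ^ (1/s)) := by ring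
    _ ≤ E * (H x * (μu (Ioc 0 x)) ^ (1/s)) := by
        apply mul_le_mul_right
        apply mul_le_mul_right
        rw [← hstep3]
        exact iInf_rpow_le _ hs
    _ ≤ E * A ^ (1/s) := by
        apply mul_le_mul_right
        have : H x * (μu (Ioc 0 x)) ^ (1/s) = (H x ^ s * μu (Ioc 0 x)) ^ (1/s) := by
          rw [ENNReal.mul_rpow_of_nonneg _ _ (by positivity), ← ENNReal.rpow_mul,
            mul_one_div_cancel hs.ne', ENNReal.rpow_one]
        rw [this]
        exact ENNReal.rpow_le_rpow hstep4 (by positivity)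

/-- Core inequality, `q = ∞` (hence `p = ∞`). -/
lemma core_top {u w H : ℝ → ℝ≥0∞} (hHa : Antitone H) {E : ℝ≥0∞} (hE : E ≠ ⊤)
    (hcond : ∀ t : ℝ, 0 < t → essSup w (volume.restrict (Ioo 0 t))
      ≤ E * essSup u (volume.restrict (Ioo 0 t))) :
    essSup (fun x => H x * w x) (volume.restrict (Ioi 0))
      ≤ E * essSup (fun x => u x * H x) (volume.restrict (Ioi 0)) := by
  set V : ℝ → ℝ≥0∞ := fun t => essSup u (volume.restrict (Ioo 0 t)) with hV
  have hVmono : Monotone V := by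
    intro t₁ t₂ h
    exact essSup_mono_measure' (Measure.restrict_mono (Ioo_subset_Ioo le_rfl h) le_rfl)
  have hVcont : ∀ᵐ x ∂(volume : Measure ℝ), ContinuousAt V x := by
    rw [ae_iff]
    exact measure_mono_null (fun x hx => hx) (hVmono.countable_not_continuousAt.measure_zero _)
  refine essSup_le_of_ae_le _ ?_
  have h1 : ∀ t : ℚ, ∀ᵐ x ∂volume, x ∈ Ioo (0:ℝ) (t:ℝ) →
      w x ≤ essSup w (volume.restrict (Ioo 0 (t:ℝ))) :=
    fun t => (ae_restrict_iff' measurableSet_Ioo).1 (ae_le_essSup w)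
  have h2 : ∀ᵐ x ∂volume, ∀ t : ℚ, x ∈ Ioo (0:ℝ) (t:ℝ) →
      w x ≤ essSup w (volume.restrict (Ioo 0 (t:ℝ))) := ae_all_iff.2 h1
  filter_upwards [ae_restrict_mem measurableSet_Ioi, ae_restrict_of_ae h2,
    ae_restrict_of_ae hVcont] with x hx0 hx2 hxc
  have hx0' : (0:ℝ) < x := hx0
  haveI : Nonempty {t : ℚ // x < (t:ℝ)} := by
    obtain ⟨t, ht⟩ := exists_rat_gt x
    exact ⟨⟨t, ht⟩⟩
  set ι := {t : ℚ // x < (t:ℝ)}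
  have hwx : w x ≤ E * ⨅ t : ι, V ((t:ℚ):ℝ) := by
    apply le_mul_of_forall hE
    intro t
    exact le_trans (hx2 t ⟨hx0', t.2⟩) (hcond _ (lt_trans hx0' t.2))
  have hVx : (⨅ t : ι, V ((t:ℚ):ℝ)) ≤ V x := by
    have hlim : Tendsto V (nhdsWithin x (Ioi x)) (nhds (sInf (V '' Ioi x))) :=
      hVmono.tendsto_nhdsGT x
    have hlim2 : Tendsto V (nhdsWithin x (Ioi x)) (nhds (V x)) :=
      (hxc.continuousWithinAt).tendsto
    have heq : sInf (V '' Ioi x) = V x := tendsto_nhds_unique hlim hlim2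
    rw [← heq]
    apply le_sInf
    rintro b ⟨y, hy, rfl⟩
    obtain ⟨z, hz1, hz2⟩ := exists_rat_btwn (show x < y from hy)
    exact le_trans (iInf_le _ ⟨z, hz1⟩) (hVmono hz2.le)
  calc H x * w x ≤ H x * (E * V x) := by
        apply mul_le_mul_right
        exact le_trans hwx (mul_le_mul_right hVx E)
    _ = E * (H x * V x) := by ring
    _ ≤ E * essSup (fun y => u y * H y) (volume.restrict (Ioi 0)) := by
        apply mul_le_mul_right
        calc H x * V x = essSup (fun y => H x * u y) (volume.restrict (Ioo 0 x)) :=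
              (ENNReal.essSup_const_mul).symm
          _ ≤ essSup (fun y => u y * H y) (volume.restrict (Ioo 0 x)) := by
              refine essSup_mono_ae ?_
              filter_upwards [ae_restrict_mem measurableSet_Ioo] with y hy
              rw [mul_comm]
              exact mul_le_mul_right (hHa hy.2.le) _
          _ ≤ essSup (fun y => u y * H y) (volume.restrict (Ioi 0)) :=
              essSup_mono_measure' (Measure.restrict_mono (fun y hy => hy.1) le_rfl)


lemma wnorm_congr_ae (p : ℝ≥0∞) {f g : ℝ → ℝ≥0∞} {s : Set ℝ}
    (h : f =ᵐ[volume.restrict s] g) : wnorm p f s = wnorm p g s := by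
  unfold wnorm
  split_ifs
  · exact essSup_congr_ae h
  · congr 1
    apply lintegral_congr_ae
    filter_upwards [h] with x hx
    rw [hx]

lemma wnorm_mono_ae (p : ℝ≥0∞) {f g : ℝ → ℝ≥0∞} {s : Set ℝ}
    (h : f ≤ᵐ[volume.restrict s] g) : wnorm p f s ≤ wnorm p g s := by
  unfold wnorm
  split_ifs
  · exact essSup_mono_ae h
  · apply ENNReal.rpow_le_rpow _ (by positivity)
    apply lintegral_mono_ae
    filter_upwards [h] with x hx
    exact ENNReal.rpow_le_rpow hx ENNReal.toReal_nonneg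

lemma wnorm_indicator (p : ℝ≥0∞) (hp : p ≠ 0) (w : ℝ → ℝ≥0∞) (t : ℝ) :
    wnorm p (fun x => (Ioo (0:ℝ) t).indicator (fun _ => (1:ℝ≥0∞)) x * w x) (Ioi 0)
      = wnorm p w (Ioo 0 t) := by
  have h1 : ∀ x, (Ioo (0:ℝ) t).indicator (fun _ => (1:ℝ≥0∞)) x * w x
      = (Ioo (0:ℝ) t).indicator w x := by
    intro x; by_cases h : x ∈ Ioo (0:ℝ) t
    · rw [Set.indicator_of_mem h, Set.indicator_of_mem h, one_mul]
    · rw [Set.indicator_of_notMem h, Set.indicator_of_notMem h, zero_mul]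
  unfold wnorm
  split_ifs with hptop
  · rw [essSup_congr_ae (ae_of_all _ h1)]
    rw [show ((Ioo (0:ℝ) t).indicator w) = (Ioo (0:ℝ) t).indicator w from rfl]
    rw [essSup_indicator_eq_essSup_restrict measurableSet_Ioo,
      Measure.restrict_restrict measurableSet_Ioo,
      Set.inter_eq_left.2 (fun x hx => hx.1)]
  · have hr : 0 < p.toReal := ENNReal.toReal_pos hp hptop
    congr 1
    calc ∫⁻ x in Ioi (0:ℝ), ((Ioo (0:ℝ) t).indicator (fun _ => (1:ℝ≥0∞)) x * w x) ^ p.toReal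
        = ∫⁻ x in Ioi (0:ℝ), (Ioo (0:ℝ) t).indicator (fun x => w x ^ p.toReal) x := by
          apply lintegral_congr; intro x
          rw [h1]
          by_cases h : x ∈ Ioo (0:ℝ) t
          · rw [Set.indicator_of_mem h, Set.indicator_of_mem h]
          · rw [Set.indicator_of_notMem h, Set.indicator_of_notMem h,
              ENNReal.zero_rpow_of_pos hr]
      _ = ∫⁻ x in Ioo (0:ℝ) t, w x ^ p.toReal := by
          rw [lintegral_indicator measurableSet_Ioo,
            Measure.restrict_restrict measurableSet_Ioo,
            Set.inter_eq_left.2 (fun x hx => hx.1)]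

lemma essSup_indicator_lt {t s : ℝ} (hs : 0 < s) (hst : s < t) :
    essSup ((Ioo (0:ℝ) t).indicator (fun _ => (1:ℝ≥0∞))) (volume.restrict (Ioi s)) = 1 := by
  apply le_antisymm
  · refine essSup_le_of_ae_le _ ?_
    apply ae_of_all
    intro y
    by_cases h : y ∈ Ioo (0:ℝ) t
    · rw [Set.indicator_of_mem h]
    · rw [Set.indicator_of_notMem h]; exact zero_le_one
  · by_contra hlt
    push_neg at hlt
    set c := essSup ((Ioo (0:ℝ) t).indicator (fun _ => (1:ℝ≥0∞))) (volume.restrict (Ioi s))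
    have hae := ae_le_essSup (μ := volume.restrict (Ioi s))
      ((Ioo (0:ℝ) t).indicator (fun _ => (1:ℝ≥0∞)))
    rw [ae_iff] at hae
    have hsub : Ioo s t ⊆ {y | ¬ (Ioo (0:ℝ) t).indicator (fun _ => (1:ℝ≥0∞)) y ≤ c} := by
      intro y hy
      have hmem : y ∈ Ioo (0:ℝ) t := ⟨lt_trans hs hy.1, hy.2⟩
      simp only [Set.mem_setOf_eq, Set.indicator_of_mem hmem]
      exact not_le.2 hlt
    have h0 : (volume.restrict (Ioi s)) (Ioo s t) = 0 :=
      measure_mono_null hsub hae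
    rw [Measure.restrict_apply measurableSet_Ioo,
      Set.inter_eq_left.2 (fun y hy => hy.1), Real.volume_Ioo] at h0
    rw [ENNReal.ofReal_eq_zero] at h0
    linarith

lemma essSup_indicator_ge {t s : ℝ} (hst : t ≤ s) :
    essSup ((Ioo (0:ℝ) t).indicator (fun _ => (1:ℝ≥0∞))) (volume.restrict (Ioi s)) = 0 := by
  rw [← le_zero_iff]
  refine essSup_le_of_ae_le _ ?_
  filter_upwards [ae_restrict_mem measurableSet_Ioi] with y hy
  have : y ∉ Ioo (0:ℝ) t := fun hmem => absurd hmem.2 (not_lt.2 (le_trans hst hy.le))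
  rw [Set.indicator_of_notMem this]

lemma rhs_indicator (q : ℝ≥0∞) {u : ℝ → ℝ≥0∞} {t : ℝ} (ht : 0 < t) :
    wnorm q (fun sx => u sx
        * essSup ((Ioo (0:ℝ) t).indicator (fun _ => (1:ℝ≥0∞))) (volume.restrict (Ioi sx)))
      (Ioi 0)
      = wnorm q (fun x => (Ioo (0:ℝ) t).indicator (fun _ => (1:ℝ≥0∞)) x * u x) (Ioi 0) := by
  apply wnorm_congr_ae
  filter_upwards [ae_restrict_mem measurableSet_Ioi] with s hs
  rcases lt_or_ge s t with h | h
  · rw [essSup_indicator_lt hs h, Set.indicator_of_mem (show s ∈ Ioo (0:ℝ) t from ⟨hs, h⟩), mul_one, one_mul]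
  · rw [essSup_indicator_ge h, Set.indicator_of_notMem
      (fun hmem => absurd hmem.2 (not_lt.2 h)), mul_zero, zero_mul]

/-- the constant -/
def Cc (p q : ℝ≥0∞) : ℝ≥0∞ :=
  max 1 (if p = ∞ then 1 else ENNReal.ofReal (p.toReal / q.toReal) ^ (1 / p.toReal))

lemma Cc_lt_top (p q : ℝ≥0∞) : Cc p q < ⊤ := by
  unfold Cc
  apply max_lt one_lt_top
  split_ifs
  · exact one_lt_top
  · exact ENNReal.rpow_lt_top_of_nonneg (by positivity) ofReal_ne_top

lemma one_le_Cc (p q : ℝ≥0∞) : 1 ≤ Cc p q := le_max_left _ _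

/-- Main inequality: `‖g w‖_p ≤ C E ‖u ⋅ S* g‖_q`. -/
lemma main_ineq (p q : ℝ≥0∞) (hq : 0 < q) (hqp : q ≤ p) {u w : ℝ → ℝ≥0∞}
    (hu : Measurable u) (hw : Measurable w)
    (hfin : ∀ t ∈ Ioi (0:ℝ), wnorm q u (Ioo 0 t) < ∞)
    {E : ℝ≥0∞} (hE : E ≠ ⊤)
    (hcond : ∀ t : ℝ, 0 < t → wnorm p w (Ioo 0 t) ≤ E * wnorm q u (Ioo 0 t))
    (g : ℝ → ℝ≥0∞) (hg : Measurable g) :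
    wnorm p (fun x => g x * w x) (Ioi 0)
      ≤ Cc p q * E
        * wnorm q (fun t => u t * essSup g (volume.restrict (Ioi t))) (Ioi 0) := by
  have hp : 0 < p := lt_of_lt_of_le hq hqp
  set h : ℝ → ℝ≥0∞ := fun t => essSup g (volume.restrict (Ioi t)) with hh
  have hha : Antitone h := by
    intro t₁ t₂ ht
    exact essSup_mono_measure' (Measure.restrict_mono (Ioi_subset_Ioi ht) le_rfl)
  set H : ℝ → ℝ≥0∞ := fun x => ⨅ t : ℚ, ⨅ _ : 0 < ((t:ℚ):ℝ) ∧ ((t:ℚ):ℝ) < x, h ((t:ℚ):ℝ)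
    with hH
  have hHa : Antitone H := by
    intro x₁ x₂ hx
    refine le_iInf fun t => le_iInf fun htc => ?_
    exact iInf_le_of_le t (iInf_le_of_le ⟨htc.1, lt_of_lt_of_le htc.2 hx⟩ le_rfl)
  have hHm : Measurable H := hHa.measurable
  -- g ≤ H a.e. on (0,∞)
  have hgH : ∀ᵐ x ∂(volume.restrict (Ioi (0:ℝ))), g x ≤ H x := by
    have base : ∀ t : ℚ, ∀ᵐ x ∂(volume : Measure ℝ), x ∈ Ioi ((t:ℚ):ℝ) → g x ≤ h ((t:ℚ):ℝ) :=
      fun t => (ae_restrict_iff' measurableSet_Ioi).1 (ae_le_essSup g)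
    filter_upwards [ae_restrict_of_ae (ae_all_iff.2 base)] with x hx
    exact le_iInf fun t => le_iInf fun htc => hx t htc.2
  -- H ≤ h a.e. on (0,∞)
  have hHh : ∀ᵐ x ∂(volume.restrict (Ioi (0:ℝ))), H x ≤ h x := by
    have hcont : ∀ᵐ x ∂(volume : Measure ℝ), ContinuousAt h x := by
      rw [ae_iff]
      exact measure_mono_null (fun x hx => hx)
        (hha.countable_not_continuousAt.measure_zero _)
    filter_upwards [ae_restrict_mem measurableSet_Ioi, ae_restrict_of_ae hcont] with x hx0 hxc
    have hx0' : (0:ℝ) < x := hx0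
    have hlim : Tendsto h (nhdsWithin x (Iio x)) (nhds (sInf (h '' Iio x))) :=
      hha.tendsto_nhdsLT x
    have hlim2 : Tendsto h (nhdsWithin x (Iio x)) (nhds (h x)) :=
      (hxc.continuousWithinAt).tendsto
    have heq : sInf (h '' Iio x) = h x := tendsto_nhds_unique hlim hlim2
    rw [← heq]
    apply le_sInf
    rintro b ⟨y, hy, rfl⟩
    have hmax : max y 0 < x := max_lt hy hx0'
    obtain ⟨z, hz1, hz2⟩ := exists_rat_btwn hmax
    have hz0 : (0:ℝ) < (z:ℝ) := lt_of_le_of_lt (le_max_right y 0) hz1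
    have hzy : y ≤ (z:ℝ) := le_trans (le_max_left y 0) hz1.le
    exact le_trans (iInf_le_of_le z (iInf_le_of_le ⟨hz0, hz2⟩ le_rfl)) (hha hzy)
  -- step 1 : LHS g ≤ LHS-with-H
  have step1 : wnorm p (fun x => g x * w x) (Ioi 0)
      ≤ wnorm p (fun x => H x * w x) (Ioi 0) := by
    apply wnorm_mono_ae
    filter_upwards [hgH] with x hx
    exact mul_le_mul_left hx _
  -- step 2 : RHS-with-H ≤ RHS g
  have step2 : wnorm q (fun x => u x * H x) (Ioi 0)
      ≤ wnorm q (fun t => u t * h t) (Ioi 0) := by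
    apply wnorm_mono_ae
    filter_upwards [hHh] with x hx
    exact mul_le_mul_right hx _
  refine le_trans step1 (le_trans ?_ (mul_le_mul_right step2 _))
  -- core estimate: wnorm p (H w) ≤ Cc p q * E * wnorm q (u H)
  rcases eq_or_ne q ⊤ with hqt | hqt
  · -- q = ∞, so p = ∞
    have hpt : p = ⊤ := top_le_iff.1 (hqt ▸ hqp)
    have hcond' : ∀ t : ℝ, 0 < t → essSup w (volume.restrict (Ioo 0 t))
        ≤ E * essSup u (volume.restrict (Ioo 0 t)) := by
      intro t ht
      have := hcond t ht
      unfold wnorm at this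
      rw [if_pos hpt, if_pos hqt] at this
      exact this
    have hcore := core_top hHa hE hcond'
    unfold wnorm
    rw [if_pos hpt, if_pos hqt]
    calc essSup (fun x => H x * w x) (volume.restrict (Ioi 0))
        ≤ E * essSup (fun x => u x * H x) (volume.restrict (Ioi 0)) := hcore
      _ ≤ Cc p q * E * essSup (fun x => u x * H x) (volume.restrict (Ioi 0)) :=
          mul_le_mul_left (le_mul_of_one_le_left (zero_le (a := E)) (one_le_Cc p q)) _
  · have hs : 0 < q.toReal := ENNReal.toReal_pos hq.ne' hqt
    have hfin' : ∀ t : ℝ, 0 < t → ∫⁻ x in Ioo (0:ℝ) t, u x ^ q.toReal ≠ ⊤ := by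
      intro t ht
      have := hfin t ht
      unfold wnorm at this
      rw [if_neg hqt] at this
      intro hcontra
      rw [hcontra, ENNReal.top_rpow_of_pos (by positivity)] at this
      exact absurd this (lt_irrefl _)
    rcases eq_or_ne p ⊤ with hpt | hpt
    · -- p = ∞, q < ∞
      have hcond' : ∀ t : ℝ, 0 < t → essSup w (volume.restrict (Ioo 0 t))
          ≤ E * (∫⁻ x in Ioo (0:ℝ) t, u x ^ q.toReal) ^ (1/q.toReal) := by
        intro t ht
        have := hcond t ht
        unfold wnorm at this
        rw [if_pos hpt, if_neg hqt] at this
        exact this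
      have hcore := core_inf hu hHm hHa hs hE hfin' hcond'
      unfold wnorm
      rw [if_pos hpt, if_neg hqt]
      have hrw : ∫⁻ x in Ioi (0:ℝ), (u x * H x) ^ q.toReal
          = ∫⁻ x in Ioi (0:ℝ), H x ^ q.toReal * u x ^ q.toReal := by
        apply lintegral_congr; intro x
        rw [ENNReal.mul_rpow_of_nonneg _ _ hs.le, mul_comm]
      rw [hrw]
      calc essSup (fun x => H x * w x) (volume.restrict (Ioi 0))
          ≤ E * (∫⁻ x in Ioi (0:ℝ), H x ^ q.toReal * u x ^ q.toReal) ^ (1/q.toReal) := hcore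
        _ ≤ Cc p q * E * (∫⁻ x in Ioi (0:ℝ), H x ^ q.toReal * u x ^ q.toReal) ^ (1/q.toReal) :=
            mul_le_mul_left (le_mul_of_one_le_left (zero_le (a := E)) (one_le_Cc p q)) _
    · -- both finite
      have hr : 0 < p.toReal := ENNReal.toReal_pos hp.ne' hpt
      have hsr : q.toReal ≤ p.toReal := ENNReal.toReal_mono hpt hqp
      have hcond' : ∀ t : ℝ, 0 < t →
          ∫⁻ x in Ioo (0:ℝ) t, w x ^ p.toReal
            ≤ E ^ p.toReal * (∫⁻ x in Ioo (0:ℝ) t, u x ^ q.toReal) ^ (p.toReal/q.toReal) := by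
        intro t ht
        have hc := hcond t ht
        unfold wnorm at hc
        rw [if_neg hpt, if_neg hqt] at hc
        have := ENNReal.rpow_le_rpow hc hr.le
        rw [ENNReal.mul_rpow_of_nonneg _ _ hr.le, ← ENNReal.rpow_mul, ← ENNReal.rpow_mul,
          one_div_mul_cancel hr.ne', ENNReal.rpow_one] at this
        rw [show 1/q.toReal * p.toReal = p.toReal/q.toReal by ring] at this
        exact this
      have hcore := core_fin hu hw hHm hHa hs hsr hE hcond'
      unfold wnorm
      rw [if_neg hpt, if_neg hqt]
      have hrw1 : ∫⁻ x in Ioi (0:ℝ), (H x * w x) ^ p.toReal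
          = ∫⁻ x in Ioi (0:ℝ), H x ^ p.toReal * w x ^ p.toReal :=
        lintegral_congr fun x => ENNReal.mul_rpow_of_nonneg _ _ hr.le
      have hrw2 : ∫⁻ x in Ioi (0:ℝ), (u x * H x) ^ q.toReal
          = ∫⁻ x in Ioi (0:ℝ), H x ^ q.toReal * u x ^ q.toReal := by
        apply lintegral_congr; intro x
        rw [ENNReal.mul_rpow_of_nonneg _ _ hs.le, mul_comm]
      rw [hrw1, hrw2]
      calc (∫⁻ x in Ioi (0:ℝ), H x ^ p.toReal * w x ^ p.toReal) ^ (1/p.toReal)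
          ≤ (ENNReal.ofReal (p.toReal/q.toReal) * E ^ p.toReal
              * (∫⁻ x in Ioi (0:ℝ), H x ^ q.toReal * u x ^ q.toReal)
                  ^ (p.toReal/q.toReal)) ^ (1/p.toReal) :=
            ENNReal.rpow_le_rpow hcore (by positivity)
        _ = ENNReal.ofReal (p.toReal/q.toReal) ^ (1/p.toReal) * E
              * (∫⁻ x in Ioi (0:ℝ), H x ^ q.toReal * u x ^ q.toReal) ^ (1/q.toReal) := by
            rw [ENNReal.mul_rpow_of_nonneg _ _ (by positivity),
              ENNReal.mul_rpow_of_nonneg _ _ (by positivity),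
              ← ENNReal.rpow_mul, ← ENNReal.rpow_mul,
              mul_one_div_cancel hr.ne', ENNReal.rpow_one]
            congr 2
            field_simp
        _ ≤ Cc p q * E
              * (∫⁻ x in Ioi (0:ℝ), H x ^ q.toReal * u x ^ q.toReal) ^ (1/q.toReal) := by
            apply mul_le_mul_left
            apply mul_le_mul_left
            unfold Cc
            rw [if_neg hpt]
            exact le_max_right _ _


end RSCAux

open RSCAux in
/-- reverse inequality for the supremal operator `S*`, `0 < q ≤ p ≤ ∞`. -/
theorem reverse_supremal_copson (p q : ℝ≥0∞) (hq : 0 < q) (hqp : q ≤ p) :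
    ∃ c₁ c₂ : ℝ≥0∞, 0 < c₁ ∧ c₂ < ∞ ∧
      ∀ u w : ℝ → ℝ≥0∞, Measurable u → Measurable w →
        (∀ t ∈ Ioi (0:ℝ), wnorm q u (Ioo 0 t) < ∞) →
        (let LHS : (ℝ → ℝ≥0∞) → ℝ≥0∞ := fun g => wnorm p (fun x => g x * w x) (Ioi 0)
         let RHS : (ℝ → ℝ≥0∞) → ℝ≥0∞ := fun g =>
            wnorm q (fun t => u t * essSup g (volume.restrict (Ioi t))) (Ioi 0)
         let E : ℝ≥0∞ := ⨆ t ∈ Ioi (0:ℝ), wnorm p w (Ioo 0 t) * (wnorm q u (Ioo 0 t))⁻¹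
         let best : ℝ≥0∞ := ⨆ g : {g : ℝ → ℝ≥0∞ // Measurable g}, LHS g.1 / RHS g.1
         ((∃ c : ℝ≥0∞, c < ∞ ∧ ∀ g : ℝ → ℝ≥0∞, Measurable g → LHS g ≤ c * RHS g) ↔ E < ∞)
           ∧ c₁ * E ≤ best ∧ best ≤ c₂ * E) := by
  refine ⟨1, Cc p q, one_pos, Cc_lt_top p q, ?_⟩
  intro u w hu hw hfin
  intro LHS RHS E best
  set gt : ℝ → ℝ → ℝ≥0∞ := fun t => (Ioo (0:ℝ) t).indicator (fun _ => (1:ℝ≥0∞)) with hgt_def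
  have hgt : ∀ t : ℝ, Measurable (gt t) :=
    fun t => measurable_const.indicator measurableSet_Ioo
  have hp : 0 < p := lt_of_lt_of_le hq hqp
  have hL : ∀ t : ℝ, LHS (gt t) = wnorm p w (Ioo 0 t) :=
    fun t => wnorm_indicator p hp.ne' w t
  have hR : ∀ t : ℝ, 0 < t → RHS (gt t) = wnorm q u (Ioo 0 t) := by
    intro t ht
    show wnorm q (fun s => u s * essSup (gt t) (volume.restrict (Ioi s))) (Ioi 0)
      = wnorm q u (Ioo 0 t)
    rw [rhs_indicator q ht, wnorm_indicator q hq.ne' u t]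
  have hEcond : E ≠ ⊤ → ∀ t : ℝ, 0 < t →
      wnorm p w (Ioo 0 t) ≤ E * wnorm q u (Ioo 0 t) := by
    intro hE t ht
    apply cond_of_E hE (hfin t ht).ne
    exact le_iSup₂ (f := fun t (_ : t ∈ Ioi (0:ℝ)) =>
      wnorm p w (Ioo 0 t) * (wnorm q u (Ioo 0 t))⁻¹) t ht
  have hmain : E ≠ ⊤ → ∀ g : ℝ → ℝ≥0∞, Measurable g →
      LHS g ≤ Cc p q * E * RHS g := by
    intro hE g hg
    exact main_ineq p q hq hqp hu hw hfin hE (hEcond hE) g hg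
  refine ⟨?_, ?_, ?_⟩
  · constructor
    · rintro ⟨c, hc, hineq⟩
      refine lt_of_le_of_lt ?_ hc
      refine iSup₂_le fun t ht => ?_
      have h1 := hineq (gt t) (hgt t)
      rw [hL t, hR t ht] at h1
      rw [← div_eq_mul_inv]
      exact ENNReal.div_le_of_le_mul h1
    · intro hE
      refine ⟨Cc p q * E, ?_, ?_⟩
      · exact ENNReal.mul_lt_top (Cc_lt_top p q) hE
      · exact hmain hE.ne
  · rw [one_mul]
    refine iSup₂_le fun t ht => ?_
    refine le_iSup_of_le ⟨gt t, hgt t⟩ ?_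
    show wnorm p w (Ioo 0 t) * (wnorm q u (Ioo 0 t))⁻¹ ≤ LHS (gt t) / RHS (gt t)
    rw [hL t, hR t ht, div_eq_mul_inv]
  · rcases eq_or_ne E ⊤ with hEt | hEt
    · rw [hEt, ENNReal.mul_top (lt_of_lt_of_le one_pos (one_le_Cc p q)).ne']
      exact le_top
    · refine iSup_le ?_
      rintro ⟨g, hg⟩
      exact ENNReal.div_le_of_le_mul (hmain hEt g hg)
end
end
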